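/- arXiv:2210.04649 — 2 statements merged into one kernel-verified Lean document; each statement's English description precedes it below -/
import Mathlib

section
/- Let G be a connected decomposable claw-free graph with maximum degree 3 such that χ'_irr(G) > 3 and every decomposable claw-free graph with maximum degree at most 3 and fewer edges than G has locally irregular chromatic index at most 3. Then G contains no 4-cycle incident with two consecutive (adjacent) vertices of degree 2. -/
/-- A graph is *locally irregular* if no two adjacent vertices have the same degree. -/
def LocallyIrregular {V : Type*} (G : SimpleGraph V) : Prop :=
  ∀ ⦃u v : V⦄, G.Adj u v → (G.neighborSet u).ncard ≠ (G.neighborSet v).ncard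

/-- `HasLIEC G k` : `G` admits a locally irregular edge-coloring using at most `k` colors,
i.e. an assignment of one of `k` colors to every edge such that the edges of each fixed
color induce a locally irregular graph. -/
def HasLIEC {V : Type*} (G : SimpleGraph V) (k : ℕ) : Prop :=
  ∃ c : Sym2 V → Fin k, ∀ i : Fin k,
    LocallyIrregular (SimpleGraph.fromEdgeSet {e | e ∈ G.edgeSet ∧ c e = i})

/-- A graph is *decomposable* if it admits a locally irregular edge-coloring. -/
def Decomposable {V : Type*} (G : SimpleGraph V) : Prop :=
  ∃ k : ℕ, HasLIEC G k

/-- A graph is *claw-free* if it contains no induced subgraph isomorphic to `K_{1,3}`. -/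
def ClawFree {V : Type*} (G : SimpleGraph V) : Prop :=
  ¬ ∃ v a b c : V, a ≠ b ∧ a ≠ c ∧ b ≠ c ∧
      G.Adj v a ∧ G.Adj v b ∧ G.Adj v c ∧ ¬ G.Adj a b ∧ ¬ G.Adj a c ∧ ¬ G.Adj b c

/-- `G` has maximum degree at most `d`. -/
def MaxDegreeLE {V : Type*} (G : SimpleGraph V) (d : ℕ) : Prop :=
  ∀ v : V, (G.neighborSet v).ncard ≤ d

set_option maxHeartbeats 1600000

namespace LIECAux

open SimpleGraph Set

variable {V : Type*} {W : Type*} {α : Type*}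

/-- degree of `v` in the color class `i` of coloring `f` on graph `K`. -/
noncomputable def Dd (K : SimpleGraph V) (f : Sym2 V → α) (i : α) (v : V) : ℕ :=
  ({w | K.Adj v w ∧ f s(v, w) = i}).ncard

lemma class_adj (K : SimpleGraph V) (f : Sym2 V → α) (i : α) (u v : V) :
    (SimpleGraph.fromEdgeSet {e | e ∈ K.edgeSet ∧ f e = i}).Adj u v ↔
      (K.Adj u v ∧ f s(u, v) = i) := by
  rw [SimpleGraph.fromEdgeSet_adj]
  constructor
  · rintro ⟨⟨h1, h2⟩, _⟩
    exact ⟨K.mem_edgeSet.mp h1, h2⟩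
  · rintro ⟨h1, h2⟩
    exact ⟨⟨K.mem_edgeSet.mpr h1, h2⟩, h1.ne⟩

lemma class_nbr (K : SimpleGraph V) (f : Sym2 V → α) (i : α) (v : V) :
    (SimpleGraph.fromEdgeSet {e | e ∈ K.edgeSet ∧ f e = i}).neighborSet v =
      {w | K.Adj v w ∧ f s(v, w) = i} := by
  ext w
  rw [SimpleGraph.mem_neighborSet, class_adj]
  rfl

lemma LI_iff (K : SimpleGraph V) (f : Sym2 V → α) (i : α) :
    LocallyIrregular (SimpleGraph.fromEdgeSet {e | e ∈ K.edgeSet ∧ f e = i}) ↔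
      ∀ u v, K.Adj u v → f s(u, v) = i → Dd K f i u ≠ Dd K f i v := by
  constructor
  · intro h u v h1 h2
    have := h ((class_adj K f i u v).mpr ⟨h1, h2⟩)
    rwa [class_nbr, class_nbr] at this
  · intro h u v hadj
    obtain ⟨h1, h2⟩ := (class_adj K f i u v).mp hadj
    rw [class_nbr, class_nbr]
    exact h u v h1 h2

lemma Dd_explicit {K : SimpleGraph V} {f : Sym2 V → α} {i : α} {v : V} {T : Set V}
    (h : ∀ w, (K.Adj v w ∧ f s(v, w) = i) ↔ w ∈ T) : Dd K f i v = T.ncard := by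
  unfold Dd
  congr 1
  ext w
  exact h w

lemma Dd_congr {K K' : SimpleGraph V} {β : Type*} {f : Sym2 V → α} {f' : Sym2 V → β}
    {i : α} {i' : β} {v : V}
    (h : ∀ w, (K.Adj v w ∧ f s(v, w) = i) ↔ (K'.Adj v w ∧ f' s(v, w) = i')) :
    Dd K f i v = Dd K' f' i' v := by
  unfold Dd
  congr 1
  ext w
  exact h w

lemma ncard_triple {a b c : V} (hab : a ≠ b) (hac : a ≠ c) (hbc : b ≠ c) :
    ({a, b, c} : Set V).ncard = 3 := by
  rw [Set.ncard_insert_of_notMem (by simp [hab, hac]) (Set.toFinite _),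
    Set.ncard_pair hbc]

lemma set_eq_pair {S : Set V} (hfin : S.Finite) (h2 : S.ncard = 2) {x y : V}
    (hx : x ∈ S) (hy : y ∈ S) (hxy : x ≠ y) : S = {x, y} := by
  have h : ({x, y} : Set V) ⊆ S := by
    rintro w (rfl | rfl) <;> assumption
  exact (Set.eq_of_subset_of_ncard_le h (by rw [h2, Set.ncard_pair hxy]) hfin).symm

lemma set_eq_triple {S : Set V} (hfin : S.Finite) (h3 : S.ncard = 3) {x y : V}
    (hx : x ∈ S) (hy : y ∈ S) (hxy : x ≠ y) :
    ∃ z, z ≠ x ∧ z ≠ y ∧ S = {x, y, z} := by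
  have hsub : ({x, y} : Set V) ⊆ S := by rintro w (rfl | rfl) <;> assumption
  have hd : (S \ {x, y}).ncard = 1 := by
    rw [Set.ncard_diff hsub (Set.toFinite _), h3,
      Set.ncard_pair hxy]
  obtain ⟨z, hz⟩ := Set.ncard_eq_one.mp hd
  have hzmem : z ∈ S \ ({x, y} : Set V) := hz ▸ rfl
  refine ⟨z, ?_, ?_, ?_⟩
  · intro h; exact hzmem.2 (by simp [h])
  · intro h; exact hzmem.2 (by simp [h])
  · ext w
    constructor
    · intro hw
      by_cases hwx : w = x
      · simp [hwx]
      by_cases hwy : w = y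
      · simp [hwy]
      have : w ∈ S \ ({x, y} : Set V) := ⟨hw, by simp [hwx, hwy]⟩
      rw [hz] at this
      simp [this]
    · rintro (rfl | rfl | rfl)
      · exact hx
      · exact hy
      · exact hzmem.1

lemma sym2_ne {x y u v : V} (h1 : ¬(x = u ∧ y = v)) (h2 : ¬(x = v ∧ y = u)) :
    s(x, y) ≠ s(u, v) := by
  intro h
  rw [Sym2.eq_iff] at h
  tauto

lemma clawfree_deleteEdges (G : SimpleGraph V) (S : Set (Sym2 V)) (hcf : ClawFree G)
    (h : ∀ x y, G.Adj x y → s(x, y) ∈ S →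
      (∀ w, ¬(G.deleteEdges S).Adj x w) ∨ (∀ w, ¬(G.deleteEdges S).Adj y w)) :
    ClawFree (G.deleteEdges S) := by
  rintro ⟨v, x, y, z, hxy, hxz, hyz, hvx, hvy, hvz, hnxy, hnxz, hnyz⟩
  have key : ∀ p q : V, ¬(G.deleteEdges S).Adj p q → (G.deleteEdges S).Adj v p →
      (G.deleteEdges S).Adj v q → ¬G.Adj p q := by
    intro p q hnpq hvp hvq hpq
    have hmem : s(p, q) ∈ S := by
      by_contra hne
      exact hnpq (SimpleGraph.deleteEdges_adj.mpr ⟨hpq, hne⟩)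
    rcases h p q hpq hmem with h' | h'
    · exact h' v hvp.symm
    · exact h' v hvq.symm
  exact hcf ⟨v, x, y, z, hxy, hxz, hyz,
    (SimpleGraph.deleteEdges_le S) hvx, (SimpleGraph.deleteEdges_le S) hvy,
    (SimpleGraph.deleteEdges_le S) hvz,
    key x y hnxy hvx hvy, key x z hnxz hvx hvz, key y z hnyz hvy hvz⟩

lemma maxdeg_mono {G H : SimpleGraph V} [Fintype V] (h : H ≤ G) {n : ℕ}
    (hG : MaxDegreeLE G n) : MaxDegreeLE H n := by
  intro v
  refine le_trans (Set.ncard_le_ncard ?_ (Set.toFinite _)) (hG v)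
  intro w hw
  exact h hw

lemma edge_lt {G : SimpleGraph V} [Fintype V] {S : Set (Sym2 V)} {x y : V}
    (hxy : G.Adj x y) (hmem : s(x, y) ∈ S) :
    (G.deleteEdges S).edgeSet.ncard < G.edgeSet.ncard := by
  rw [SimpleGraph.edgeSet_deleteEdges]
  refine Set.ncard_lt_ncard ⟨Set.diff_subset, ?_⟩ (Set.toFinite _)
  intro hsub
  have h1 : s(x, y) ∈ G.edgeSet := G.mem_edgeSet.mpr hxy
  have := hsub h1
  exact this.2 hmem

end LIECAux

namespace LIECAux

open SimpleGraph Set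

variable {V : Type*} {W : Type*}

lemma comap_nbr_ncard (e : W ≃ V) (K : SimpleGraph V) (x : W) :
    ((K.comap ⇑e).neighborSet x).ncard = (K.neighborSet (e x)).ncard := by
  have h : (K.comap ⇑e).neighborSet x = ⇑e.symm '' K.neighborSet (e x) := by
    ext y
    simp only [SimpleGraph.mem_neighborSet, SimpleGraph.comap_adj, Set.mem_image]
    constructor
    · intro h
      exact ⟨e y, h, by simp⟩
    · rintro ⟨z, hz, rfl⟩
      simpa using hz
  rw [h, Set.ncard_image_of_injective _ e.symm.injective]

lemma LI_comap (e : W ≃ V) (K : SimpleGraph V) (h : LocallyIrregular K) :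
    LocallyIrregular (K.comap ⇑e) := by
  intro u v hadj
  rw [comap_nbr_ncard, comap_nbr_ncard]
  exact h hadj

lemma hasLIEC_comap (e : W ≃ V) (K : SimpleGraph V) (k : ℕ) (h : HasLIEC K k) :
    HasLIEC (K.comap ⇑e) k := by
  obtain ⟨c, hc⟩ := h
  refine ⟨c ∘ Sym2.map ⇑e, fun i => ?_⟩
  have hcl : SimpleGraph.fromEdgeSet {p | p ∈ (K.comap ⇑e).edgeSet ∧ (c ∘ Sym2.map ⇑e) p = i}
      = (SimpleGraph.fromEdgeSet {p | p ∈ K.edgeSet ∧ c p = i}).comap ⇑e := by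
    ext x y
    rw [class_adj, SimpleGraph.comap_adj, SimpleGraph.comap_adj, class_adj]
    simp [Sym2.map_pair_eq]
  rw [hcl]
  exact LI_comap e _ (hc i)

lemma clawfree_comap (e : W ≃ V) (K : SimpleGraph V) (h : ClawFree K) :
    ClawFree (K.comap ⇑e) := by
  rintro ⟨v, x, y, z, hxy, hxz, hyz, hvx, hvy, hvz, hnxy, hnxz, hnyz⟩
  rw [SimpleGraph.comap_adj] at hvx hvy hvz
  exact h ⟨e v, e x, e y, e z, e.injective.ne hxy, e.injective.ne hxz, e.injective.ne hyz,
    hvx, hvy, hvz, fun hh => hnxy (SimpleGraph.comap_adj.mpr hh),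
    fun hh => hnxz (SimpleGraph.comap_adj.mpr hh),
    fun hh => hnyz (SimpleGraph.comap_adj.mpr hh)⟩

lemma edgeSet_comap_ncard (e : W ≃ V) (K : SimpleGraph V) :
    ((K.comap ⇑e).edgeSet).ncard = K.edgeSet.ncard := by
  have h : K.edgeSet = Sym2.map ⇑e '' (K.comap ⇑e).edgeSet := by
    ext p
    induction p with
    | _ x y =>
      simp only [SimpleGraph.mem_edgeSet, Set.mem_image]
      constructor
      · intro h
        refine ⟨s(e.symm x, e.symm y), ?_, by simp [Sym2.map_pair_eq]⟩
        rw [SimpleGraph.mem_edgeSet, SimpleGraph.comap_adj]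
        simpa using h
      · rintro ⟨q, hq, heq⟩
        induction q with
        | _ u v =>
          rw [Sym2.map_pair_eq] at heq
          rw [SimpleGraph.mem_edgeSet, SimpleGraph.comap_adj] at hq
          rw [Sym2.eq_iff] at heq
          rcases heq with ⟨h1, h2⟩ | ⟨h1, h2⟩
          · rw [← h1, ← h2]; exact hq
          · rw [← h1, ← h2]; exact hq.symm
  rw [h, Set.ncard_image_of_injective _ (Sym2.map.injective e.injective)]

lemma comap_comap_symm (e : W ≃ V) (K : SimpleGraph V) :
    (K.comap ⇑e).comap ⇑e.symm = K := by
  ext x y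
  rw [SimpleGraph.comap_adj, SimpleGraph.comap_adj]
  simp

lemma transfer {V : Type u} [Fintype V] (G : SimpleGraph V)
    (hmin : ∀ (W : Type) [Fintype W] (H : SimpleGraph W),
      Decomposable H → ClawFree H → MaxDegreeLE H 3 →
      H.edgeSet.ncard < G.edgeSet.ncard → HasLIEC H 3)
    (H : SimpleGraph V) (h1 : Decomposable H) (h2 : ClawFree H) (h3 : MaxDegreeLE H 3)
    (h4 : H.edgeSet.ncard < G.edgeSet.ncard) : HasLIEC H 3 := by
  classical
  set e : Fin (Fintype.card V) ≃ V := (Fintype.equivFin V).symm with he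
  set H₀ : SimpleGraph (Fin (Fintype.card V)) := H.comap ⇑e with hH
  have hd : Decomposable H₀ := by
    obtain ⟨k, hk⟩ := h1
    exact ⟨k, hasLIEC_comap e H k hk⟩
  have hcf : ClawFree H₀ := clawfree_comap e H h2
  have hmd : MaxDegreeLE H₀ 3 := fun v => by
    rw [hH, comap_nbr_ncard]
    exact h3 _
  have hlt : H₀.edgeSet.ncard < G.edgeSet.ncard := by
    rw [hH, edgeSet_comap_ncard]; exact h4
  have := hmin (Fin (Fintype.card V)) H₀ hd hcf hmd hlt
  have h5 : HasLIEC (H₀.comap ⇑e.symm) 3 := hasLIEC_comap e.symm H₀ 3 this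
  rwa [hH, comap_comap_symm] at h5

end LIECAux

namespace LIECAux

open SimpleGraph Set

variable {V : Type*}

lemma third3 : ∀ x y : Fin 3, x ≠ y → ∃ z : Fin 3, z ≠ x ∧ z ≠ y := by decide

lemma triple3 : ∀ t : Fin 3, ∃ s r : Fin 3, s ≠ t ∧ r ≠ t ∧ s ≠ r := by decide

lemma closure (G : SimpleGraph V) (hconn : G.Connected) (S : Set V) {a : V} (ha : a ∈ S)
    (hcl : ∀ u ∈ S, ∀ v, G.Adj u v → v ∈ S) : ∀ v, v ∈ S := by
  intro v
  obtain ⟨w⟩ := hconn.preconnected a v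
  clear hconn
  induction w with
  | nil => exact ha
  | cons h p ih => exact ih (hcl _ ha _ h)

lemma claw_case {G : SimpleGraph V} (hclaw : ClawFree G) {a b c d e : V}
    (hNa : G.neighborSet a = {b, d}) (hNb : G.neighborSet b = {a, c})
    (hNc : G.neighborSet c = {b, d}) (hNd : G.neighborSet d = {a, c, e})
    (hbd : b ≠ d) (hac : a ≠ c) (hea : e ≠ a) (hec : e ≠ c) : False := by
  have hmemd : ∀ w, G.Adj d w ↔ w ∈ ({a, c, e} : Set V) := by
    intro w; rw [← hNd, SimpleGraph.mem_neighborSet]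
  have hmema : ∀ w, G.Adj a w ↔ w ∈ ({b, d} : Set V) := by
    intro w; rw [← hNa, SimpleGraph.mem_neighborSet]
  have hmemb : ∀ w, G.Adj b w ↔ w ∈ ({a, c} : Set V) := by
    intro w; rw [← hNb, SimpleGraph.mem_neighborSet]
  have hmemc : ∀ w, G.Adj c w ↔ w ∈ ({b, d} : Set V) := by
    intro w; rw [← hNc, SimpleGraph.mem_neighborSet]
  have hda : G.Adj d a := (hmemd a).mpr (by simp)
  have hdc : G.Adj d c := (hmemd c).mpr (by simp)
  have hde : G.Adj d e := (hmemd e).mpr (by simp)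
  have hcb : G.Adj c b := (hmemc b).mpr (by simp)
  have hncb : c ≠ b := hcb.ne
  have hncd : c ≠ d := hdc.ne'
  have hnda : d ≠ a := hda.ne
  have hneb : e ≠ b := by
    rintro rfl
    have : d ∈ ({a, c} : Set V) := (hmemb d).mp hde.symm
    rcases this with h | h
    · exact hnda h
    · exact hncd (Set.mem_singleton_iff.mp h).symm
  have hned : e ≠ d := hde.ne'
  exact hclaw ⟨d, a, c, e, hac, hea.symm, hec.symm, hda, hdc, hde,
    fun h => by rcases (hmema c).mp h with h' | h' <;> [exact hncb h'; exact hncd (Set.mem_singleton_iff.mp h')],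
    fun h => by rcases (hmema e).mp h with h' | h' <;> [exact hneb h'; exact hned (Set.mem_singleton_iff.mp h')],
    fun h => by rcases (hmemc e).mp h with h' | h' <;> [exact hneb h'; exact hned (Set.mem_singleton_iff.mp h')]⟩

end LIECAux

open LIECAux SimpleGraph Set in
/-- In a minimal counterexample to the 3-color theorem for claw-free subcubic graphs, there is no 4-cycle incident with two consecutive vertices of degree 2. -/
theorem minimal_cex_no_C4_two_consecutive_deg2 {V : Type*} [Fintype V] (G : SimpleGraph V)
    (hconn : G.Connected) (hdec : Decomposable G) (hclaw : ClawFree G)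
    (hdeg : MaxDegreeLE G 3) (hG : ¬ HasLIEC G 3)
    (hmin : ∀ (W : Type) [Fintype W] (H : SimpleGraph W),
      Decomposable H → ClawFree H → MaxDegreeLE H 3 →
      H.edgeSet.ncard < G.edgeSet.ncard → HasLIEC H 3) :
    ¬ ∃ a b c d : V, a ≠ c ∧ b ≠ d ∧ G.Adj a b ∧ G.Adj b c ∧ G.Adj c d ∧ G.Adj d a ∧
      (G.neighborSet a).ncard = 2 ∧ (G.neighborSet b).ncard = 2 := by
  classical
  rintro ⟨a, b, c, d, hac, hbd, hab, hbc, hcd, hda, ha2, hb2⟩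
  have nab : a ≠ b := hab.ne
  have nbc : b ≠ c := hbc.ne
  have ncd : c ≠ d := hcd.ne
  have nda : d ≠ a := hda.ne
  have hNa : G.neighborSet a = {b, d} :=
    set_eq_pair (Set.toFinite _) ha2 ((G.mem_neighborSet a b).mpr hab)
      ((G.mem_neighborSet a d).mpr hda.symm) hbd
  have hNb : G.neighborSet b = {a, c} :=
    set_eq_pair (Set.toFinite _) hb2 ((G.mem_neighborSet b a).mpr hab.symm)
      ((G.mem_neighborSet b c).mpr hbc) hac
  have hmema : ∀ w, G.Adj a w ↔ w ∈ ({b, d} : Set V) := fun w => by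
    rw [← hNa, SimpleGraph.mem_neighborSet]
  have hmemb : ∀ w, G.Adj b w ↔ w ∈ ({a, c} : Set V) := fun w => by
    rw [← hNb, SimpleGraph.mem_neighborSet]
  have hnac : ¬ G.Adj a c := fun h => by
    rcases (hmema c).mp h with h' | h'
    · exact nbc h'.symm
    · exact ncd (Set.mem_singleton_iff.mp h')
  have hnbd : ¬ G.Adj b d := fun h => by
    rcases (hmemb d).mp h with h' | h'
    · exact nda h'
    · exact ncd (Set.mem_singleton_iff.mp h').symm
  -- degree of c
  have hcsub : ({b, d} : Set V) ⊆ G.neighborSet c := by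
    intro w hw
    rcases hw with h | h
    · rw [h]; exact (G.mem_neighborSet c b).mpr hbc.symm
    · rw [Set.mem_singleton_iff.mp h]; exact (G.mem_neighborSet c d).mpr hcd
  have hc_ge : 2 ≤ (G.neighborSet c).ncard := by
    rw [← Set.ncard_pair hbd]
    exact Set.ncard_le_ncard hcsub (Set.toFinite _)
  have hdsub : ({a, c} : Set V) ⊆ G.neighborSet d := by
    intro w hw
    rcases hw with h | h
    · rw [h]; exact (G.mem_neighborSet d a).mpr hda
    · rw [Set.mem_singleton_iff.mp h]; exact (G.mem_neighborSet d c).mpr hcd.symm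
  have hd_ge : 2 ≤ (G.neighborSet d).ncard := by
    rw [← Set.ncard_pair hac]
    exact Set.ncard_le_ncard hdsub (Set.toFinite _)
  have hc23 : (G.neighborSet c).ncard = 2 ∨ (G.neighborSet c).ncard = 3 := by
    have := hdeg c; omega
  have hd23 : (G.neighborSet d).ncard = 2 ∨ (G.neighborSet d).ncard = 3 := by
    have := hdeg d; omega
  rcases hc23 with hc2 | hc3 <;> rcases hd23 with hd2 | hd3
  · -- Case A : G is a 4-cycle
    have hNc : G.neighborSet c = {b, d} :=
      set_eq_pair (Set.toFinite _) hc2 (hcsub (by simp)) (hcsub (by simp)) hbd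
    have hNd : G.neighborSet d = {a, c} :=
      set_eq_pair (Set.toFinite _) hd2 (hdsub (by simp)) (hdsub (by simp)) hac
    have hmemc : ∀ w, G.Adj c w ↔ w ∈ ({b, d} : Set V) := fun w => by
      rw [← hNc, SimpleGraph.mem_neighborSet]
    have hmemd : ∀ w, G.Adj d w ↔ w ∈ ({a, c} : Set V) := fun w => by
      rw [← hNd, SimpleGraph.mem_neighborSet]
    have hall : ∀ v, v ∈ ({a, b, c, d} : Set V) := by
      refine closure G hconn ({a, b, c, d} : Set V) (show a ∈ ({a, b, c, d} : Set V) by simp) ?_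
      intro u hu v hadj
      rcases hu with h | h | h | h
      · rw [h] at hadj
        rcases (hmema v).mp hadj with h' | h' <;> first | (simp [Set.mem_singleton_iff.mp h']) | simp [h']
      · rw [h] at hadj
        rcases (hmemb v).mp hadj with h' | h' <;> first | (simp [Set.mem_singleton_iff.mp h']) | simp [h']
      · rw [h] at hadj
        rcases (hmemc v).mp hadj with h' | h' <;> first | (simp [Set.mem_singleton_iff.mp h']) | simp [h']
      · rw [Set.mem_singleton_iff.mp h] at hadj
        rcases (hmemd v).mp hadj with h' | h' <;> first | (simp [Set.mem_singleton_iff.mp h']) | simp [h']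
    set f : Sym2 V → Fin 3 :=
      fun p => if p = s(a, b) ∨ p = s(b, c) then 0 else 1 with hf
    have hfab : f s(a, b) = 0 := if_pos (Or.inl rfl)
    have hfbc : f s(b, c) = 0 := if_pos (Or.inr rfl)
    have hfcd : f s(c, d) = 1 := by
      refine if_neg ?_
      rintro (h | h)
      · exact absurd h (sym2_ne (fun hh => hac hh.1.symm) (fun hh => nbc hh.1.symm))
      · exact absurd h (sym2_ne (fun hh => nbc hh.1.symm) (fun hh => hbd hh.2.symm))
    have hfad : f s(a, d) = 1 := by
      refine if_neg ?_
      rintro (h | h)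
      · exact absurd h (sym2_ne (fun hh => hbd hh.2.symm) (fun hh => nab hh.1))
      · exact absurd h (sym2_ne (fun hh => nab hh.1) (fun hh => hac hh.1))
    have hDa0 : Dd G f 0 a = 1 := by
      have h : ∀ w, (G.Adj a w ∧ f s(a, w) = 0) ↔ w ∈ ({b} : Set V) := by
        intro w
        constructor
        · rintro ⟨hadj, hcol⟩
          rcases (hmema w).mp hadj with h | h
          · simp [h]
          · rw [Set.mem_singleton_iff.mp h] at hcol
            rw [hfad] at hcol
            exact absurd hcol (by decide)
        · intro hw
          rw [Set.mem_singleton_iff.mp hw]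
          exact ⟨hab, hfab⟩
      rw [Dd_explicit h]
      exact Set.ncard_singleton _
    have hDa1 : Dd G f 1 a = 1 := by
      have h : ∀ w, (G.Adj a w ∧ f s(a, w) = 1) ↔ w ∈ ({d} : Set V) := by
        intro w
        constructor
        · rintro ⟨hadj, hcol⟩
          rcases (hmema w).mp hadj with h | h
          · rw [h] at hcol
            rw [hfab] at hcol
            exact absurd hcol (by decide)
          · exact h
        · intro hw
          rw [Set.mem_singleton_iff.mp hw]
          exact ⟨hda.symm, hfad⟩
      rw [Dd_explicit h]
      exact Set.ncard_singleton _
    have hDb0 : Dd G f 0 b = 2 := by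
      have h : ∀ w, (G.Adj b w ∧ f s(b, w) = 0) ↔ w ∈ ({a, c} : Set V) := by
        intro w
        constructor
        · rintro ⟨hadj, _⟩
          exact (hmemb w).mp hadj
        · intro hw
          rcases hw with h | h
          · rw [h]
            exact ⟨hab.symm, by rw [Sym2.eq_swap]; exact hfab⟩
          · rw [Set.mem_singleton_iff.mp h]
            exact ⟨hbc, hfbc⟩
      rw [Dd_explicit h]
      exact Set.ncard_pair hac
    have hDc0 : Dd G f 0 c = 1 := by
      have h : ∀ w, (G.Adj c w ∧ f s(c, w) = 0) ↔ w ∈ ({b} : Set V) := by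
        intro w
        constructor
        · rintro ⟨hadj, hcol⟩
          rcases (hmemc w).mp hadj with h | h
          · simp [h]
          · rw [Set.mem_singleton_iff.mp h] at hcol
            rw [hfcd] at hcol
            exact absurd hcol (by decide)
        · intro hw
          rw [Set.mem_singleton_iff.mp hw]
          exact ⟨hbc.symm, by rw [Sym2.eq_swap]; exact hfbc⟩
      rw [Dd_explicit h]
      exact Set.ncard_singleton _
    have hDc1 : Dd G f 1 c = 1 := by
      have h : ∀ w, (G.Adj c w ∧ f s(c, w) = 1) ↔ w ∈ ({d} : Set V) := by
        intro w
        constructor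
        · rintro ⟨hadj, hcol⟩
          rcases (hmemc w).mp hadj with h | h
          · rw [h] at hcol
            rw [show s(c, b) = s(b, c) from Sym2.eq_swap, hfbc] at hcol
            exact absurd hcol (by decide)
          · exact h
        · intro hw
          rw [Set.mem_singleton_iff.mp hw]
          exact ⟨hcd, hfcd⟩
      rw [Dd_explicit h]
      exact Set.ncard_singleton _
    have hDd1 : Dd G f 1 d = 2 := by
      have h : ∀ w, (G.Adj d w ∧ f s(d, w) = 1) ↔ w ∈ ({a, c} : Set V) := by
        intro w
        constructor
        · rintro ⟨hadj, _⟩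
          exact (hmemd w).mp hadj
        · intro hw
          rcases hw with h | h
          · rw [h]
            exact ⟨hda, by rw [Sym2.eq_swap]; exact hfad⟩
          · rw [Set.mem_singleton_iff.mp h]
            exact ⟨hcd.symm, by rw [Sym2.eq_swap]; exact hfcd⟩
      rw [Dd_explicit h]
      exact Set.ncard_pair hac
    refine hG ⟨f, fun i => (LI_iff G f i).mpr ?_⟩
    intro u v hadj hcol
    rcases hall u with hu | hu | hu | hu
    · subst hu
      rcases (hmema v).mp hadj with h | h
      · rw [h] at hcol ⊢
        rw [hfab] at hcol
        rw [← hcol, hDa0, hDb0]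
        decide
      · rw [Set.mem_singleton_iff.mp h] at hcol ⊢
        rw [hfad] at hcol
        rw [← hcol, hDa1, hDd1]
        decide
    · subst hu
      rcases (hmemb v).mp hadj with h | h
      · rw [h] at hcol ⊢
        rw [Sym2.eq_swap, hfab] at hcol
        rw [← hcol, hDa0, hDb0]
        decide
      · rw [Set.mem_singleton_iff.mp h] at hcol ⊢
        rw [hfbc] at hcol
        rw [← hcol, hDb0, hDc0]
        decide
    · subst hu
      rcases (hmemc v).mp hadj with h | h
      · rw [h] at hcol ⊢
        rw [Sym2.eq_swap, hfbc] at hcol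
        rw [← hcol, hDb0, hDc0]
        decide
      · rw [Set.mem_singleton_iff.mp h] at hcol ⊢
        rw [hfcd] at hcol
        rw [← hcol, hDc1, hDd1]
        decide
    · rw [Set.mem_singleton_iff.mp hu] at hadj hcol ⊢
      rcases (hmemd v).mp hadj with h | h
      · rw [h] at hcol ⊢
        rw [Sym2.eq_swap, hfad] at hcol
        rw [← hcol, hDa1, hDd1]
        decide
      · rw [Set.mem_singleton_iff.mp h] at hcol ⊢
        rw [Sym2.eq_swap, hfcd] at hcol
        rw [← hcol, hDc1, hDd1]
        decide
  · -- claw at d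
    obtain ⟨e, hea, hec, hNd⟩ :=
      set_eq_triple (Set.toFinite _) hd3 (hdsub (by simp)) (hdsub (by simp)) hac
    have hNc : G.neighborSet c = {b, d} :=
      set_eq_pair (Set.toFinite _) hc2 (hcsub (by simp)) (hcsub (by simp)) hbd
    exact claw_case hclaw hNa hNb hNc hNd hbd hac hea hec
  · -- claw at c (symmetric)
    obtain ⟨f, hfb, hfd, hNc⟩ :=
      set_eq_triple (Set.toFinite _) hc3 (hcsub (by simp)) (hcsub (by simp)) hbd
    have hNd : G.neighborSet d = {a, c} :=
      set_eq_pair (Set.toFinite _) hd2 (hdsub (by simp)) (hdsub (by simp)) hac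
    exact claw_case hclaw hNb hNa hNd hNc hac hbd hfb hfd
  · -- main case: triangle
    obtain ⟨e, hea, hec, hNd⟩ :=
      set_eq_triple (Set.toFinite _) hd3 (hdsub (by simp)) (hdsub (by simp)) hac
    obtain ⟨f, hfb, hfd, hNc⟩ :=
      set_eq_triple (Set.toFinite _) hc3 (hcsub (by simp)) (hcsub (by simp)) hbd
    have hmemc : ∀ w, G.Adj c w ↔ w ∈ ({b, d, f} : Set V) := fun w => by
      rw [← hNc, SimpleGraph.mem_neighborSet]
    have hmemd : ∀ w, G.Adj d w ↔ w ∈ ({a, c, e} : Set V) := fun w => by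
      rw [← hNd, SimpleGraph.mem_neighborSet]
    have hde : G.Adj d e := (hmemd e).mpr (by simp)
    have ned : e ≠ d := hde.ne'
    have neb : e ≠ b := fun h => hnbd (by rw [← h]; exact hde.symm)
    have hce : G.Adj c e := by
      by_contra hnce
      refine hclaw ⟨d, a, c, e, hac, hea.symm, hec.symm, hda, hcd.symm, hde, hnac, ?_, hnce⟩
      intro h
      rcases (hmema e).mp h with h' | h'
      · exact neb h'
      · exact ned (Set.mem_singleton_iff.mp h')
    have hef : e = f := by
      rcases (hmemc e).mp hce with h' | h' | h'
      · exact absurd h' neb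
      · exact absurd h' ned
      · exact Set.mem_singleton_iff.mp h'
    subst hef
    have hesub : ({c, d} : Set V) ⊆ G.neighborSet e := by
      intro w hw
      rcases hw with h | h
      · rw [h]; exact (G.mem_neighborSet e c).mpr hce.symm
      · rw [Set.mem_singleton_iff.mp h]; exact (G.mem_neighborSet e d).mpr hde.symm
    have he_ge : 2 ≤ (G.neighborSet e).ncard := by
      rw [← Set.ncard_pair ncd]
      exact Set.ncard_le_ncard hesub (Set.toFinite _)
    have he23 : (G.neighborSet e).ncard = 2 ∨ (G.neighborSet e).ncard = 3 := by
      have := hdeg e; omega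
    rcases he23 with he2 | he3
    · -- Case C1 : the house graph
      have hNe : G.neighborSet e = {c, d} :=
        set_eq_pair (Set.toFinite _) he2 (hesub (by simp)) (hesub (by simp)) ncd
      have hmeme : ∀ w, G.Adj e w ↔ w ∈ ({c, d} : Set V) := fun w => by
        rw [← hNe, SimpleGraph.mem_neighborSet]
      have hall : ∀ v, v ∈ ({a, b, c, d, e} : Set V) := by
        refine closure G hconn ({a, b, c, d, e} : Set V)
          (show a ∈ ({a, b, c, d, e} : Set V) by simp) ?_
        intro u hu v hadj
        rcases hu with h | h | h | h | h
        · rw [h] at hadj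
          rcases (hmema v).mp hadj with h' | h' <;>
            first | (simp [Set.mem_singleton_iff.mp h']) | simp [h']
        · rw [h] at hadj
          rcases (hmemb v).mp hadj with h' | h' <;>
            first | (simp [Set.mem_singleton_iff.mp h']) | simp [h']
        · rw [h] at hadj
          rcases (hmemc v).mp hadj with h' | h' | h' <;>
            first | (simp [Set.mem_singleton_iff.mp h']) | simp [h']
        · rw [h] at hadj
          rcases (hmemd v).mp hadj with h' | h' | h' <;>
            first | (simp [Set.mem_singleton_iff.mp h']) | simp [h']
        · rw [Set.mem_singleton_iff.mp h] at hadj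
          rcases (hmeme v).mp hadj with h' | h' <;>
            first | (simp [Set.mem_singleton_iff.mp h']) | simp [h']
      set q3 : Sym2 V → Fin 3 := fun p =>
        if p = s(a, b) ∨ p = s(a, d) then 0
        else if p = s(b, c) ∨ p = s(c, d) then 1 else 2 with hq3
      have vab : q3 s(a, b) = 0 := if_pos (Or.inl rfl)
      have vad : q3 s(a, d) = 0 := if_pos (Or.inr rfl)
      have nbc_ab : s(b, c) ≠ s(a, b) :=
        sym2_ne (fun hh => nab hh.1.symm) (fun hh => hac hh.2.symm)
      have nbc_ad : s(b, c) ≠ s(a, d) :=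
        sym2_ne (fun hh => nab hh.1.symm) (fun hh => hbd hh.1)
      have ncd_ab : s(c, d) ≠ s(a, b) :=
        sym2_ne (fun hh => hac hh.1.symm) (fun hh => nbc hh.1.symm)
      have ncd_ad : s(c, d) ≠ s(a, d) :=
        sym2_ne (fun hh => hac hh.1.symm) (fun hh => ncd hh.1)
      have vbc : q3 s(b, c) = 1 := by
        rw [hq3]
        simp only []
        rw [if_neg (by rintro (h | h); exacts [nbc_ab h, nbc_ad h])]
        simp
      have vcd : q3 s(c, d) = 1 := by
        rw [hq3]
        simp only []
        rw [if_neg (by rintro (h | h); exacts [ncd_ab h, ncd_ad h])]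
        simp
      have vce : q3 s(c, e) = 2 := by
        rw [hq3]
        simp only []
        rw [if_neg (by
          rintro (h | h)
          · exact sym2_ne (fun hh => hac hh.1.symm) (fun hh => nbc hh.1.symm) h
          · exact sym2_ne (fun hh => hac hh.1.symm) (fun hh => ncd hh.1) h)]
        rw [if_neg (by
          rintro (h | h)
          · exact sym2_ne (fun hh => nbc hh.1.symm) (fun hh => neb hh.2) h
          · exact sym2_ne (fun hh => ned hh.2) (fun hh => ncd hh.1) h)]
      have vde : q3 s(d, e) = 2 := by
        rw [hq3]
        simp only []
        rw [if_neg (by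
          rintro (h | h)
          · exact sym2_ne (fun hh => nda hh.1) (fun hh => hbd hh.1.symm) h
          · exact sym2_ne (fun hh => nda hh.1) (fun hh => hea hh.2) h)]
        rw [if_neg (by
          rintro (h | h)
          · exact sym2_ne (fun hh => hbd hh.1.symm) (fun hh => ncd hh.1.symm) h
          · exact sym2_ne (fun hh => ncd hh.1.symm) (fun hh => hec hh.2) h)]
      have hD0a : Dd G q3 0 a = 2 := by
        have h : ∀ w, (G.Adj a w ∧ q3 s(a, w) = 0) ↔ w ∈ ({b, d} : Set V) := by
          intro w
          constructor
          · rintro ⟨hadj, _⟩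
            exact (hmema w).mp hadj
          · intro hw
            rcases hw with h | h
            · rw [h]; exact ⟨hab, vab⟩
            · rw [Set.mem_singleton_iff.mp h]; exact ⟨hda.symm, vad⟩
        rw [Dd_explicit h]
        exact Set.ncard_pair hbd
      have hD0b : Dd G q3 0 b = 1 := by
        have h : ∀ w, (G.Adj b w ∧ q3 s(b, w) = 0) ↔ w ∈ ({a} : Set V) := by
          intro w
          constructor
          · rintro ⟨hadj, hc2'⟩
            rcases (hmemb w).mp hadj with h | h
            · simp [h]
            · rw [Set.mem_singleton_iff.mp h, vbc] at hc2'
              exact absurd hc2' (by decide)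
          · intro hw
            rw [Set.mem_singleton_iff.mp hw]
            exact ⟨hab.symm, by rw [Sym2.eq_swap]; exact vab⟩
        rw [Dd_explicit h]
        exact Set.ncard_singleton _
      have hD0d : Dd G q3 0 d = 1 := by
        have h : ∀ w, (G.Adj d w ∧ q3 s(d, w) = 0) ↔ w ∈ ({a} : Set V) := by
          intro w
          constructor
          · rintro ⟨hadj, hc2'⟩
            rcases (hmemd w).mp hadj with h | h | h
            · simp [h]
            · rw [h, show s(d, c) = s(c, d) from Sym2.eq_swap, vcd] at hc2'
              exact absurd hc2' (by decide)
            · rw [Set.mem_singleton_iff.mp h, vde] at hc2'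
              exact absurd hc2' (by decide)
          · intro hw
            rw [Set.mem_singleton_iff.mp hw]
            exact ⟨hda, by rw [Sym2.eq_swap]; exact vad⟩
        rw [Dd_explicit h]
        exact Set.ncard_singleton _
      have hD1b : Dd G q3 1 b = 1 := by
        have h : ∀ w, (G.Adj b w ∧ q3 s(b, w) = 1) ↔ w ∈ ({c} : Set V) := by
          intro w
          constructor
          · rintro ⟨hadj, hc2'⟩
            rcases (hmemb w).mp hadj with h | h
            · rw [h, show s(b, a) = s(a, b) from Sym2.eq_swap, vab] at hc2'
              exact absurd hc2' (by decide)
            · exact h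
          · intro hw
            rw [Set.mem_singleton_iff.mp hw]
            exact ⟨hbc, vbc⟩
        rw [Dd_explicit h]
        exact Set.ncard_singleton _
      have hD1c : Dd G q3 1 c = 2 := by
        have h : ∀ w, (G.Adj c w ∧ q3 s(c, w) = 1) ↔ w ∈ ({b, d} : Set V) := by
          intro w
          constructor
          · rintro ⟨hadj, hc2'⟩
            rcases (hmemc w).mp hadj with h | h | h
            · simp [h]
            · simp [h]
            · rw [Set.mem_singleton_iff.mp h, vce] at hc2'
              exact absurd hc2' (by decide)
          · intro hw
            rcases hw with h | h
            · rw [h]; exact ⟨hbc.symm, by rw [Sym2.eq_swap]; exact vbc⟩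
            · rw [Set.mem_singleton_iff.mp h]; exact ⟨hcd, vcd⟩
        rw [Dd_explicit h]
        exact Set.ncard_pair hbd
      have hD1d : Dd G q3 1 d = 1 := by
        have h : ∀ w, (G.Adj d w ∧ q3 s(d, w) = 1) ↔ w ∈ ({c} : Set V) := by
          intro w
          constructor
          · rintro ⟨hadj, hc2'⟩
            rcases (hmemd w).mp hadj with h | h | h
            · rw [h, show s(d, a) = s(a, d) from Sym2.eq_swap, vad] at hc2'
              exact absurd hc2' (by decide)
            · simp [h]
            · rw [Set.mem_singleton_iff.mp h, vde] at hc2'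
              exact absurd hc2' (by decide)
          · intro hw
            rw [Set.mem_singleton_iff.mp hw]
            exact ⟨hcd.symm, by rw [Sym2.eq_swap]; exact vcd⟩
        rw [Dd_explicit h]
        exact Set.ncard_singleton _
      have hD2c : Dd G q3 2 c = 1 := by
        have h : ∀ w, (G.Adj c w ∧ q3 s(c, w) = 2) ↔ w ∈ ({e} : Set V) := by
          intro w
          constructor
          · rintro ⟨hadj, hc2'⟩
            rcases (hmemc w).mp hadj with h | h | h
            · rw [h, show s(c, b) = s(b, c) from Sym2.eq_swap, vbc] at hc2'
              exact absurd hc2' (by decide)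
            · rw [h, vcd] at hc2'
              exact absurd hc2' (by decide)
            · exact h
          · intro hw
            rw [Set.mem_singleton_iff.mp hw]
            exact ⟨hce, vce⟩
        rw [Dd_explicit h]
        exact Set.ncard_singleton _
      have hD2d : Dd G q3 2 d = 1 := by
        have h : ∀ w, (G.Adj d w ∧ q3 s(d, w) = 2) ↔ w ∈ ({e} : Set V) := by
          intro w
          constructor
          · rintro ⟨hadj, hc2'⟩
            rcases (hmemd w).mp hadj with h | h | h
            · rw [h, show s(d, a) = s(a, d) from Sym2.eq_swap, vad] at hc2'
              exact absurd hc2' (by decide)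
            · rw [h, show s(d, c) = s(c, d) from Sym2.eq_swap, vcd] at hc2'
              exact absurd hc2' (by decide)
            · exact h
          · intro hw
            rw [Set.mem_singleton_iff.mp hw]
            exact ⟨hde, vde⟩
        rw [Dd_explicit h]
        exact Set.ncard_singleton _
      have hD2e : Dd G q3 2 e = 2 := by
        have h : ∀ w, (G.Adj e w ∧ q3 s(e, w) = 2) ↔ w ∈ ({c, d} : Set V) := by
          intro w
          constructor
          · rintro ⟨hadj, _⟩
            exact (hmeme w).mp hadj
          · intro hw
            rcases hw with h | h
            · rw [h]; exact ⟨hce.symm, by rw [Sym2.eq_swap]; exact vce⟩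
            · rw [Set.mem_singleton_iff.mp h]
              exact ⟨hde.symm, by rw [Sym2.eq_swap]; exact vde⟩
        rw [Dd_explicit h]
        exact Set.ncard_pair ncd
      refine hG ⟨q3, fun i => (LI_iff G q3 i).mpr ?_⟩
      intro u v hadj hcol
      rcases hall u with hu | hu | hu | hu | hu
      · subst hu
        rcases (hmema v).mp hadj with h | h
        · rw [h] at hcol ⊢
          rw [vab] at hcol
          rw [← hcol, hD0a, hD0b]; decide
        · rw [Set.mem_singleton_iff.mp h] at hcol ⊢
          rw [vad] at hcol
          rw [← hcol, hD0a, hD0d]; decide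
      · subst hu
        rcases (hmemb v).mp hadj with h | h
        · rw [h] at hcol ⊢
          rw [Sym2.eq_swap, vab] at hcol
          rw [← hcol, hD0b, hD0a]; decide
        · rw [Set.mem_singleton_iff.mp h] at hcol ⊢
          rw [vbc] at hcol
          rw [← hcol, hD1b, hD1c]; decide
      · subst hu
        rcases (hmemc v).mp hadj with h | h | h
        · rw [h] at hcol ⊢
          rw [Sym2.eq_swap, vbc] at hcol
          rw [← hcol, hD1c, hD1b]; decide
        · rw [h] at hcol ⊢
          rw [vcd] at hcol
          rw [← hcol, hD1c, hD1d]; decide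
        · rw [Set.mem_singleton_iff.mp h] at hcol ⊢
          rw [vce] at hcol
          rw [← hcol, hD2c, hD2e]; decide
      · subst hu
        rcases (hmemd v).mp hadj with h | h | h
        · rw [h] at hcol ⊢
          rw [Sym2.eq_swap, vad] at hcol
          rw [← hcol, hD0d, hD0a]; decide
        · rw [h] at hcol ⊢
          rw [Sym2.eq_swap, vcd] at hcol
          rw [← hcol, hD1d, hD1c]; decide
        · rw [Set.mem_singleton_iff.mp h] at hcol ⊢
          rw [vde] at hcol
          rw [← hcol, hD2d, hD2e]; decide
      · rw [Set.mem_singleton_iff.mp hu] at hadj hcol ⊢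
        rcases (hmeme v).mp hadj with h | h
        · rw [h] at hcol ⊢
          rw [Sym2.eq_swap, vce] at hcol
          rw [← hcol, hD2e, hD2c]; decide
        · rw [Set.mem_singleton_iff.mp h] at hcol ⊢
          rw [Sym2.eq_swap, vde] at hcol
          rw [← hcol, hD2e, hD2d]; decide

    · -- Case C2
      obtain ⟨g, hgc, hgd, hNe⟩ :=
        set_eq_triple (Set.toFinite _) he3 (hesub (by simp)) (hesub (by simp)) ncd
      have hmeme : ∀ w, G.Adj e w ↔ w ∈ ({c, d, g} : Set V) := fun w => by
        rw [← hNe, SimpleGraph.mem_neighborSet]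
      have heg : G.Adj e g := (hmeme g).mpr (by simp)
      have hge : g ≠ e := heg.ne'
      have hga : g ≠ a := by
        rintro rfl
        rcases (hmema e).mp heg.symm with h' | h'
        · exact neb h'
        · exact ned (Set.mem_singleton_iff.mp h')
      have hgb : g ≠ b := by
        rintro rfl
        rcases (hmemb e).mp heg.symm with h' | h'
        · exact hea h'
        · exact hec (Set.mem_singleton_iff.mp h')
      obtain ⟨k, co, hco⟩ := hdec
      by_cases hng : Dd G co (co s(e, g)) g = 1
      · -- branch 1 : delete the three edges at a and b, recolor the triangle
        set S3 : Set (Sym2 V) := {s(a, b), s(a, d), s(b, c)} with hS3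
        set G' : SimpleGraph V := G.deleteEdges S3 with hG'
        have hG'adj : ∀ u w, G'.Adj u w ↔ G.Adj u w ∧ s(u, w) ∉ S3 := fun u w => by
          rw [hG', SimpleGraph.deleteEdges_adj]
        have hIaG' : ∀ w, ¬G'.Adj a w := by
          intro w h
          rw [hG'adj] at h
          rcases (hmema w).mp h.1 with h' | h'
          · rw [h'] at h; exact h.2 (by simp [hS3])
          · rw [Set.mem_singleton_iff.mp h'] at h; exact h.2 (by simp [hS3])
        have hIbG' : ∀ w, ¬G'.Adj b w := by
          intro w h
          rw [hG'adj] at h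
          rcases (hmemb w).mp h.1 with h' | h'
          · rw [h'] at h; exact h.2 (by simp [hS3, Sym2.eq_swap])
          · rw [Set.mem_singleton_iff.mp h'] at h; exact h.2 (by simp [hS3])
        have hcdS3 : s(c, d) ∉ S3 := by
          simp [hS3, Sym2.eq_iff, hac.symm, nbc.symm, ncd, nda.symm, hbd.symm]
        have hceS3 : s(c, e) ∉ S3 := by
          simp [hS3, Sym2.eq_iff, hac.symm, nbc.symm, hea, neb, hec]
        have hdeS3 : s(d, e) ∉ S3 := by
          simp [hS3, Sym2.eq_iff, nda, hbd.symm, ncd.symm, hea, ned]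
        have hegS3 : s(e, g) ∉ S3 := by
          simp [hS3, Sym2.eq_iff, hea, neb, hec, hga, hgb, hgc]
        have hN'c : ∀ w, G'.Adj c w ↔ w ∈ ({d, e} : Set V) := by
          intro w
          constructor
          · intro h
            rw [hG'adj] at h
            rcases (hmemc w).mp h.1 with h' | h' | h'
            · rw [h'] at h
              exact absurd (by simp [hS3, Sym2.eq_swap] : s(c, b) ∈ S3) h.2
            · simp [h']
            · simp [Set.mem_singleton_iff.mp h']
          · intro hw
            rcases hw with h' | h'
            · rw [h', hG'adj]; exact ⟨hcd, hcdS3⟩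
            · rw [Set.mem_singleton_iff.mp h', hG'adj]; exact ⟨hce, hceS3⟩
        have hN'd : ∀ w, G'.Adj d w ↔ w ∈ ({c, e} : Set V) := by
          intro w
          constructor
          · intro h
            rw [hG'adj] at h
            rcases (hmemd w).mp h.1 with h' | h' | h'
            · rw [h'] at h
              exact absurd (by simp [hS3, Sym2.eq_swap] : s(d, a) ∈ S3) h.2
            · simp [h']
            · simp [Set.mem_singleton_iff.mp h']
          · intro hw
            rcases hw with h' | h'
            · rw [h', hG'adj]
              exact ⟨hcd.symm, by rw [Sym2.eq_swap]; exact hcdS3⟩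
            · rw [Set.mem_singleton_iff.mp h', hG'adj]; exact ⟨hde, hdeS3⟩
        have hN'e : ∀ w, G'.Adj e w ↔ w ∈ ({c, d, g} : Set V) := by
          intro w
          constructor
          · intro h
            rw [hG'adj] at h
            exact (hmeme w).mp h.1
          · intro hw
            rcases hw with h' | h' | h'
            · rw [h', hG'adj]
              exact ⟨hce.symm, by rw [Sym2.eq_swap]; exact hceS3⟩
            · rw [h', hG'adj]
              exact ⟨hde.symm, by rw [Sym2.eq_swap]; exact hdeS3⟩
            · rw [Set.mem_singleton_iff.mp h', hG'adj]
              exact ⟨heg, hegS3⟩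
        have hfarG'adj : ∀ u, u ≠ a → u ≠ b → u ≠ c → u ≠ d →
            ∀ w, G'.Adj u w ↔ G.Adj u w := by
          intro u h1 h2 h3 h4 w
          rw [hG'adj]
          constructor
          · exact fun h => h.1
          · intro h
            refine ⟨h, ?_⟩
            simp [hS3, Sym2.eq_iff, h1, h2, h3, h4]
        set ch : Sym2 V → Fin (k + 1) := fun p =>
          if p = s(c, d) then Fin.last k
          else if p = s(c, e) then Fin.last k
          else if p = s(d, e) then (co s(e, g)).castSucc
          else (co p).castSucc with hch
        have wcd : ch s(c, d) = Fin.last k := if_pos rfl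
        have wce : ch s(c, e) = Fin.last k := by
          rw [hch]
          simp only []
          rw [if_neg (sym2_ne (fun hh => ned hh.2) (fun hh => ncd hh.1))]
          simp
        have wde : ch s(d, e) = (co s(e, g)).castSucc := by
          rw [hch]
          simp only []
          rw [if_neg (sym2_ne (fun hh => ncd hh.1.symm) (fun hh => hec hh.2)),
            if_neg (sym2_ne (fun hh => ncd hh.1.symm) (fun hh => hec hh.2))]
          simp
        have weg : ch s(e, g) = (co s(e, g)).castSucc := by
          rw [hch]
          simp only []
          rw [if_neg (sym2_ne (fun hh => hec hh.1) (fun hh => ned hh.1)),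
            if_neg (sym2_ne (fun hh => hec hh.1) (fun hh => hgc hh.2)),
            if_neg (sym2_ne (fun hh => ned hh.1) (fun hh => hgd hh.2))]
        have wother : ∀ u w, u ≠ c → u ≠ d → u ≠ e → ch s(u, w) = (co s(u, w)).castSucc := by
          intro u w h3 h4 h5
          rw [hch]
          simp only []
          rw [if_neg (sym2_ne (fun hh => h3 hh.1) (fun hh => h4 hh.1)),
            if_neg (sym2_ne (fun hh => h3 hh.1) (fun hh => h5 hh.1)),
            if_neg (sym2_ne (fun hh => h4 hh.1) (fun hh => h5 hh.1))]
        have ne_last : ∀ j : Fin k, j.castSucc ≠ Fin.last k := fun j =>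
          (Fin.castSucc_lt_last j).ne
        have DLc : Dd G' ch (Fin.last k) c = 2 := by
          have h : ∀ w, (G'.Adj c w ∧ ch s(c, w) = Fin.last k) ↔ w ∈ ({d, e} : Set V) := by
            intro w
            constructor
            · rintro ⟨hadj, _⟩
              exact (hN'c w).mp hadj
            · intro hw
              rcases hw with h' | h'
              · rw [h']; exact ⟨(hN'c d).mpr (by simp), wcd⟩
              · rw [Set.mem_singleton_iff.mp h']
                exact ⟨(hN'c e).mpr (by simp), wce⟩
          rw [Dd_explicit h]
          exact Set.ncard_pair ned.symm
        have DLd : Dd G' ch (Fin.last k) d = 1 := by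
          have h : ∀ w, (G'.Adj d w ∧ ch s(d, w) = Fin.last k) ↔ w ∈ ({c} : Set V) := by
            intro w
            constructor
            · rintro ⟨hadj, hc'⟩
              rcases (hN'd w).mp hadj with h' | h'
              · simp [h']
              · rw [Set.mem_singleton_iff.mp h', wde] at hc'
                exact absurd hc' (ne_last _)
            · intro hw
              rw [Set.mem_singleton_iff.mp hw]
              exact ⟨(hN'd c).mpr (by simp), by rw [Sym2.eq_swap]; exact wcd⟩
          rw [Dd_explicit h]
          exact Set.ncard_singleton _
        have DLe : Dd G' ch (Fin.last k) e = 1 := by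
          have h : ∀ w, (G'.Adj e w ∧ ch s(e, w) = Fin.last k) ↔ w ∈ ({c} : Set V) := by
            intro w
            constructor
            · rintro ⟨hadj, hc'⟩
              rcases (hN'e w).mp hadj with h' | h' | h'
              · simp [h']
              · rw [h', show s(e, d) = s(d, e) from Sym2.eq_swap, wde] at hc'
                exact absurd hc' (ne_last _)
              · rw [Set.mem_singleton_iff.mp h', weg] at hc'
                exact absurd hc' (ne_last _)
            · intro hw
              rw [Set.mem_singleton_iff.mp hw]
              exact ⟨(hN'e c).mpr (by simp), by rw [Sym2.eq_swap]; exact wce⟩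
          rw [Dd_explicit h]
          exact Set.ncard_singleton _
        have Dtd : Dd G' ch (co s(e, g)).castSucc d = 1 := by
          have h : ∀ w, (G'.Adj d w ∧ ch s(d, w) = (co s(e, g)).castSucc) ↔
              w ∈ ({e} : Set V) := by
            intro w
            constructor
            · rintro ⟨hadj, hc'⟩
              rcases (hN'd w).mp hadj with h' | h'
              · rw [h', show s(d, c) = s(c, d) from Sym2.eq_swap, wcd] at hc'
                exact absurd hc'.symm (ne_last _)
              · exact h'
            · intro hw
              rw [Set.mem_singleton_iff.mp hw]
              exact ⟨(hN'd e).mpr (by simp), wde⟩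
          rw [Dd_explicit h]
          exact Set.ncard_singleton _
        have Dte : Dd G' ch (co s(e, g)).castSucc e = 2 := by
          have h : ∀ w, (G'.Adj e w ∧ ch s(e, w) = (co s(e, g)).castSucc) ↔
              w ∈ ({d, g} : Set V) := by
            intro w
            constructor
            · rintro ⟨hadj, hc'⟩
              rcases (hN'e w).mp hadj with h' | h' | h'
              · rw [h', show s(e, c) = s(c, e) from Sym2.eq_swap, wce] at hc'
                exact absurd hc'.symm (ne_last _)
              · simp [h']
              · simp [Set.mem_singleton_iff.mp h']
            · intro hw
              rcases hw with h' | h'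
              · rw [h']
                exact ⟨(hN'e d).mpr (by simp), by rw [Sym2.eq_swap]; exact wde⟩
              · rw [Set.mem_singleton_iff.mp h']
                exact ⟨(hN'e g).mpr (by simp), weg⟩
          rw [Dd_explicit h]
          exact Set.ncard_pair hgd.symm.symm.symm
        have Dfar : ∀ u, u ≠ a → u ≠ b → u ≠ c → u ≠ d → u ≠ e →
            ∀ j : Fin k, Dd G' ch j.castSucc u = Dd G co j u := by
          intro u h1 h2 h3 h4 h5 j
          refine Dd_congr (fun w => ?_)
          rw [hfarG'adj u h1 h2 h3 h4 w, wother u w h3 h4 h5, Fin.castSucc_inj]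
        have hdecG' : Decomposable G' := by
          refine ⟨k + 1, ch, fun i => (LI_iff G' ch i).mpr ?_⟩
          intro u v hadj hcol
          by_cases hua : u = a
          · rw [hua] at hadj; exact absurd hadj (hIaG' v)
          by_cases hub : u = b
          · rw [hub] at hadj; exact absurd hadj (hIbG' v)
          by_cases huc : u = c
          · subst huc
            rcases (hN'c v).mp hadj with h' | h'
            · rw [h'] at hcol ⊢
              rw [wcd] at hcol
              rw [← hcol, DLc, DLd]
              decide
            · rw [Set.mem_singleton_iff.mp h'] at hcol ⊢
              rw [wce] at hcol
              rw [← hcol, DLc, DLe]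
              decide
          by_cases hud : u = d
          · subst hud
            rcases (hN'd v).mp hadj with h' | h'
            · rw [h'] at hcol ⊢
              rw [Sym2.eq_swap, wcd] at hcol
              rw [← hcol, DLd, DLc]
              decide
            · rw [Set.mem_singleton_iff.mp h'] at hcol ⊢
              rw [wde] at hcol
              rw [← hcol, Dtd, Dte]
              decide
          by_cases hue : u = e
          · subst hue
            rcases (hN'e v).mp hadj with h' | h' | h'
            · rw [h'] at hcol ⊢
              rw [Sym2.eq_swap, wce] at hcol
              rw [← hcol, DLe, DLc]
              decide
            · rw [h'] at hcol ⊢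
              rw [Sym2.eq_swap, wde] at hcol
              rw [← hcol, Dte, Dtd]
              decide
            · rw [Set.mem_singleton_iff.mp h'] at hcol ⊢
              rw [weg] at hcol
              rw [← hcol, Dte, Dfar g hga hgb hgc hgd hge, hng]
              decide
          by_cases hva : v = a
          · rw [hva] at hadj; exact absurd hadj.symm (hIaG' u)
          by_cases hvb : v = b
          · rw [hvb] at hadj; exact absurd hadj.symm (hIbG' u)
          by_cases hvc : v = c
          · rw [hvc] at hadj
            rcases (hN'c u).mp hadj.symm with h' | h'
            · exact absurd h' hud
            · exact absurd (Set.mem_singleton_iff.mp h') hue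
          by_cases hvd : v = d
          · rw [hvd] at hadj
            rcases (hN'd u).mp hadj.symm with h' | h'
            · exact absurd h' huc
            · exact absurd (Set.mem_singleton_iff.mp h') hue
          by_cases hve : v = e
          · rw [hve] at hadj hcol ⊢
            rcases (hN'e u).mp hadj.symm with h' | h' | h'
            · exact absurd h' huc
            · exact absurd h' hud
            · rw [Set.mem_singleton_iff.mp h'] at hcol ⊢
              rw [show s(g, e) = s(e, g) from Sym2.eq_swap, weg] at hcol
              rw [← hcol, Dfar g hga hgb hgc hgd hge, hng, Dte]
              decide
          · have hGadj : G.Adj u v := ((hG'adj u v).mp hadj).1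
            rw [wother u v huc hud hue] at hcol
            rw [← hcol, Dfar u hua hub huc hud hue, Dfar v hva hvb hvc hvd hve]
            exact (LI_iff G co _).mp (hco _) u v hGadj rfl
        have hcfG' : ClawFree G' := by
          rw [hG']
          refine clawfree_deleteEdges G S3 hclaw ?_
          intro x y hxy hmem
          rw [← hG']
          rcases hmem with h | h | h
          · rcases Sym2.eq_iff.mp h with ⟨rfl, rfl⟩ | ⟨rfl, rfl⟩
            · exact Or.inl hIaG'
            · exact Or.inl hIbG'
          · rcases Sym2.eq_iff.mp h with ⟨rfl, rfl⟩ | ⟨rfl, rfl⟩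
            · exact Or.inl hIaG'
            · exact Or.inr hIaG'
          · rcases Sym2.eq_iff.mp (Set.mem_singleton_iff.mp h) with ⟨rfl, rfl⟩ | ⟨rfl, rfl⟩
            · exact Or.inl hIbG'
            · exact Or.inr hIbG'
        have hmdG' : MaxDegreeLE G' 3 := maxdeg_mono (SimpleGraph.deleteEdges_le S3) hdeg
        have hltG' : G'.edgeSet.ncard < G.edgeSet.ncard := by
          rw [hG']
          exact edge_lt hab (by simp [hS3])
        obtain ⟨co', hco'⟩ := transfer G hmin G' hdecG' hcfG' hmdG' hltG'
        have hG'cd : G'.Adj c d := (hN'c d).mpr (by simp)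
        have hG'ce : G'.Adj c e := (hN'c e).mpr (by simp)
        have hG'de : G'.Adj d e := (hN'd e).mpr (by simp)
        have hG'eg : G'.Adj e g := (hN'e g).mpr (by simp)
        have hcdLI := (LI_iff G' co' (co' s(c, d))).mp (hco' _) c d hG'cd rfl
        by_cases hce' : co' s(c, e) = co' s(c, d) <;>
          by_cases hde' : co' s(d, e) = co' s(c, d)
        · -- impossible : both
          exfalso
          apply hcdLI
          have h1 : ∀ w, (G'.Adj c w ∧ co' s(c, w) = co' s(c, d)) ↔ w ∈ ({d, e} : Set V) := by
            intro w
            constructor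
            · rintro ⟨hadj, _⟩
              exact (hN'c w).mp hadj
            · intro hw
              rcases hw with h' | h'
              · rw [h']; exact ⟨hG'cd, rfl⟩
              · rw [Set.mem_singleton_iff.mp h']; exact ⟨hG'ce, hce'⟩
          have h2 : ∀ w, (G'.Adj d w ∧ co' s(d, w) = co' s(c, d)) ↔ w ∈ ({c, e} : Set V) := by
            intro w
            constructor
            · rintro ⟨hadj, _⟩
              exact (hN'd w).mp hadj
            · intro hw
              rcases hw with h' | h'
              · rw [h']
                exact ⟨(hN'd c).mpr (by simp), by rw [Sym2.eq_swap]⟩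
              · rw [Set.mem_singleton_iff.mp h']; exact ⟨hG'de, hde'⟩
          rw [Dd_explicit h1, Dd_explicit h2, Set.ncard_pair ned.symm, Set.ncard_pair hec.symm]
        · -- X1 : cd and ce share a color, de has another color
          have hdeLI := (LI_iff G' co' (co' s(d, e))).mp (hco' _) d e hG'de rfl
          have Dyd' : Dd G' co' (co' s(d, e)) d = 1 := by
            have h : ∀ w, (G'.Adj d w ∧ co' s(d, w) = co' s(d, e)) ↔ w ∈ ({e} : Set V) := by
              intro w
              constructor
              · rintro ⟨hadj, hc'⟩
                rcases (hN'd w).mp hadj with h' | h'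
                · rw [h', show s(d, c) = s(c, d) from Sym2.eq_swap] at hc'
                  exact absurd hc'.symm hde'
                · exact h'
              · intro hw
                rw [Set.mem_singleton_iff.mp hw]
                exact ⟨hG'de, rfl⟩
            rw [Dd_explicit h]
            exact Set.ncard_singleton _
          have hgy : co' s(e, g) = co' s(d, e) := by
            by_contra hgy
            apply hdeLI
            have h : ∀ w, (G'.Adj e w ∧ co' s(e, w) = co' s(d, e)) ↔ w ∈ ({d} : Set V) := by
              intro w
              constructor
              · rintro ⟨hadj, hc'⟩
                rcases (hN'e w).mp hadj with h' | h' | h'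
                · rw [h', show s(e, c) = s(c, e) from Sym2.eq_swap, hce'] at hc'
                  exact absurd hc'.symm hde'
                · simp [h']
                · rw [Set.mem_singleton_iff.mp h'] at hc'
                  exact absurd hc' hgy
              · intro hw
                rw [Set.mem_singleton_iff.mp hw]
                exact ⟨hG'de.symm, by rw [Sym2.eq_swap]⟩
            rw [Dyd', Dd_explicit h, Set.ncard_singleton]
          have DyeG' : Dd G' co' (co' s(d, e)) e = 2 := by
            have h : ∀ w, (G'.Adj e w ∧ co' s(e, w) = co' s(d, e)) ↔ w ∈ ({d, g} : Set V) := by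
              intro w
              constructor
              · rintro ⟨hadj, hc'⟩
                rcases (hN'e w).mp hadj with h' | h' | h'
                · rw [h', show s(e, c) = s(c, e) from Sym2.eq_swap, hce'] at hc'
                  exact absurd hc'.symm hde'
                · simp [h']
                · simp [Set.mem_singleton_iff.mp h']
              · intro hw
                rcases hw with h' | h'
                · rw [h']
                  exact ⟨hG'de.symm, by rw [Sym2.eq_swap]⟩
                · rw [Set.mem_singleton_iff.mp h']
                  exact ⟨hG'eg, hgy⟩
            rw [Dd_explicit h]
            exact Set.ncard_pair hgd.symm
          have hgy2 : Dd G' co' (co' s(d, e)) g ≠ 2 := by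
            have h2 := (LI_iff G' co' (co' s(d, e))).mp (hco' _) e g hG'eg hgy
            rw [DyeG'] at h2
            exact fun h => h2 (by rw [h])
          obtain ⟨z, hzx, hzy⟩ := third3 (co' s(c, d)) (co' s(d, e)) (fun h => hde' h.symm)
          set f : Sym2 V → Fin 3 := fun p =>
            if p = s(a, b) then z
            else if p = s(a, d) then z
            else if p = s(b, c) then co' s(c, d) else co' p with hf
          have fab : f s(a, b) = z := if_pos rfl
          have fad : f s(a, d) = z := by
            rw [hf]
            simp only []
            rw [if_neg (sym2_ne (fun hh => hbd hh.2.symm) (fun hh => nab hh.1))]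
            simp
          have fbc : f s(b, c) = co' s(c, d) := by
            rw [hf]
            simp only []
            rw [if_neg (sym2_ne (fun hh => nab hh.1.symm) (fun hh => hac hh.2.symm)),
              if_neg (sym2_ne (fun hh => nab hh.1.symm) (fun hh => hbd hh.1))]
            simp
          have fother3 : ∀ u w, u ≠ a → u ≠ b → u ≠ c → u ≠ d →
              f s(u, w) = co' s(u, w) := by
            intro u w h1 h2 h3 h4
            rw [hf]
            simp only []
            rw [if_neg (sym2_ne (fun hh => h1 hh.1) (fun hh => h2 hh.1)),
              if_neg (sym2_ne (fun hh => h1 hh.1) (fun hh => h4 hh.1)),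
              if_neg (sym2_ne (fun hh => h2 hh.1) (fun hh => h3 hh.1))]
          have fcd : f s(c, d) = co' s(c, d) := by
            rw [hf]
            simp only []
            rw [if_neg (sym2_ne (fun hh => hac hh.1.symm) (fun hh => nbc hh.1.symm)),
              if_neg (sym2_ne (fun hh => hac hh.1.symm) (fun hh => ncd hh.1)),
              if_neg (sym2_ne (fun hh => nbc hh.1.symm) (fun hh => hbd hh.2.symm))]
          have fce : f s(c, e) = co' s(c, e) := by
            rw [hf]
            simp only []
            rw [if_neg (sym2_ne (fun hh => hac hh.1.symm) (fun hh => nbc hh.1.symm)),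
              if_neg (sym2_ne (fun hh => hac hh.1.symm) (fun hh => ncd hh.1)),
              if_neg (sym2_ne (fun hh => nbc hh.1.symm) (fun hh => neb hh.2))]
          have fde : f s(d, e) = co' s(d, e) := by
            rw [hf]
            simp only []
            rw [if_neg (sym2_ne (fun hh => nda hh.1) (fun hh => hbd hh.1.symm)),
              if_neg (sym2_ne (fun hh => nda hh.1) (fun hh => hea hh.2)),
              if_neg (sym2_ne (fun hh => hbd hh.1.symm) (fun hh => ncd hh.1.symm))]
          have feg : f s(e, g) = co' s(e, g) := by
            rw [hf]
            simp only []
            rw [if_neg (sym2_ne (fun hh => hea hh.1) (fun hh => neb hh.1)),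
              if_neg (sym2_ne (fun hh => hea hh.1) (fun hh => ned hh.1)),
              if_neg (sym2_ne (fun hh => neb hh.1) (fun hh => hec hh.1))]
          have hfarDdG1 : ∀ u, u ≠ a → u ≠ b → u ≠ c → u ≠ d →
              ∀ i : Fin 3, Dd G f i u = Dd G' co' i u := by
            intro u h1 h2 h3 h4 i
            refine Dd_congr (fun w => ?_)
            rw [hfarG'adj u h1 h2 h3 h4 w, fother3 u w h1 h2 h3 h4]
          have Dza : Dd G f z a = 2 := by
            have h : ∀ w, (G.Adj a w ∧ f s(a, w) = z) ↔ w ∈ ({b, d} : Set V) := by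
              intro w
              constructor
              · rintro ⟨hadj, _⟩
                exact (hmema w).mp hadj
              · intro hw
                rcases hw with h' | h'
                · rw [h']; exact ⟨hab, fab⟩
                · rw [Set.mem_singleton_iff.mp h']; exact ⟨hda.symm, fad⟩
            rw [Dd_explicit h]
            exact Set.ncard_pair hbd
          have Dzb : Dd G f z b = 1 := by
            have h : ∀ w, (G.Adj b w ∧ f s(b, w) = z) ↔ w ∈ ({a} : Set V) := by
              intro w
              constructor
              · rintro ⟨hadj, hc'⟩
                rcases (hmemb w).mp hadj with h' | h'
                · simp [h']
                · rw [Set.mem_singleton_iff.mp h', fbc] at hc'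
                  exact absurd hc'.symm hzx
              · intro hw
                rw [Set.mem_singleton_iff.mp hw]
                exact ⟨hab.symm, by rw [Sym2.eq_swap]; exact fab⟩
            rw [Dd_explicit h]
            exact Set.ncard_singleton _
          have Dzd : Dd G f z d = 1 := by
            have h : ∀ w, (G.Adj d w ∧ f s(d, w) = z) ↔ w ∈ ({a} : Set V) := by
              intro w
              constructor
              · rintro ⟨hadj, hc'⟩
                rcases (hmemd w).mp hadj with h' | h' | h'
                · simp [h']
                · rw [h', show s(d, c) = s(c, d) from Sym2.eq_swap, fcd] at hc'
                  exact absurd hc'.symm hzx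
                · rw [Set.mem_singleton_iff.mp h', fde] at hc'
                  exact absurd hc'.symm hzy
              · intro hw
                rw [Set.mem_singleton_iff.mp hw]
                exact ⟨hda, by rw [Sym2.eq_swap]; exact fad⟩
            rw [Dd_explicit h]
            exact Set.ncard_singleton _
          have Dxb : Dd G f (co' s(c, d)) b = 1 := by
            have h : ∀ w, (G.Adj b w ∧ f s(b, w) = co' s(c, d)) ↔ w ∈ ({c} : Set V) := by
              intro w
              constructor
              · rintro ⟨hadj, hc'⟩
                rcases (hmemb w).mp hadj with h' | h'
                · rw [h', show s(b, a) = s(a, b) from Sym2.eq_swap, fab] at hc'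
                  exact absurd hc' hzx
                · exact h'
              · intro hw
                rw [Set.mem_singleton_iff.mp hw]
                exact ⟨hbc, fbc⟩
            rw [Dd_explicit h]
            exact Set.ncard_singleton _
          have Dxc : Dd G f (co' s(c, d)) c = 3 := by
            have h : ∀ w, (G.Adj c w ∧ f s(c, w) = co' s(c, d)) ↔ w ∈ ({b, d, e} : Set V) := by
              intro w
              constructor
              · rintro ⟨hadj, _⟩
                exact (hmemc w).mp hadj
              · intro hw
                rcases hw with h' | h' | h'
                · rw [h']
                  exact ⟨hbc.symm, by rw [Sym2.eq_swap]; exact fbc⟩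
                · rw [h']; exact ⟨hcd, fcd⟩
                · rw [Set.mem_singleton_iff.mp h']
                  exact ⟨hce, by rw [fce]; exact hce'⟩
            rw [Dd_explicit h]
            exact ncard_triple hbd neb.symm ned.symm
          have Dxd : Dd G f (co' s(c, d)) d = 1 := by
            have h : ∀ w, (G.Adj d w ∧ f s(d, w) = co' s(c, d)) ↔ w ∈ ({c} : Set V) := by
              intro w
              constructor
              · rintro ⟨hadj, hc'⟩
                rcases (hmemd w).mp hadj with h' | h' | h'
                · rw [h', show s(d, a) = s(a, d) from Sym2.eq_swap, fad] at hc'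
                  exact absurd hc' hzx
                · exact h'
                · rw [Set.mem_singleton_iff.mp h', fde] at hc'
                  exact absurd hc' hde'
              · intro hw
                rw [Set.mem_singleton_iff.mp hw]
                exact ⟨hcd.symm, by rw [Sym2.eq_swap]; exact fcd⟩
            rw [Dd_explicit h]
            exact Set.ncard_singleton _
          have Dxe : Dd G f (co' s(c, d)) e = 1 := by
            have h : ∀ w, (G.Adj e w ∧ f s(e, w) = co' s(c, d)) ↔ w ∈ ({c} : Set V) := by
              intro w
              constructor
              · rintro ⟨hadj, hc'⟩
                rcases (hmeme w).mp hadj with h' | h' | h'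
                · simp [h']
                · rw [h', show s(e, d) = s(d, e) from Sym2.eq_swap, fde] at hc'
                  exact absurd hc' hde'
                · rw [Set.mem_singleton_iff.mp h', feg, hgy] at hc'
                  exact absurd hc' hde'
              · intro hw
                rw [Set.mem_singleton_iff.mp hw]
                refine ⟨hce.symm, ?_⟩
                rw [Sym2.eq_swap]
                rw [fce]
                exact hce'
            rw [Dd_explicit h]
            exact Set.ncard_singleton _
          have Dyd : Dd G f (co' s(d, e)) d = 1 := by
            have h : ∀ w, (G.Adj d w ∧ f s(d, w) = co' s(d, e)) ↔ w ∈ ({e} : Set V) := by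
              intro w
              constructor
              · rintro ⟨hadj, hc'⟩
                rcases (hmemd w).mp hadj with h' | h' | h'
                · rw [h', show s(d, a) = s(a, d) from Sym2.eq_swap, fad] at hc'
                  exact absurd hc' hzy
                · rw [h', show s(d, c) = s(c, d) from Sym2.eq_swap, fcd] at hc'
                  exact absurd hc'.symm hde'
                · exact h'
              · intro hw
                rw [Set.mem_singleton_iff.mp hw]
                exact ⟨hde, fde⟩
            rw [Dd_explicit h]
            exact Set.ncard_singleton _
          have Dye : Dd G f (co' s(d, e)) e = 2 := by
            have h : ∀ w, (G.Adj e w ∧ f s(e, w) = co' s(d, e)) ↔ w ∈ ({d, g} : Set V) := by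
              intro w
              constructor
              · rintro ⟨hadj, hc'⟩
                rcases (hmeme w).mp hadj with h' | h' | h'
                · rw [h', show s(e, c) = s(c, e) from Sym2.eq_swap, fce, hce'] at hc'
                  exact absurd hc'.symm hde'
                · simp [h']
                · simp [Set.mem_singleton_iff.mp h']
              · intro hw
                rcases hw with h' | h'
                · rw [h']
                  exact ⟨hde.symm, by rw [Sym2.eq_swap]; exact fde⟩
                · rw [Set.mem_singleton_iff.mp h']
                  exact ⟨heg, by rw [feg]; exact hgy⟩
            rw [Dd_explicit h]
            exact Set.ncard_pair hgd.symm
          refine hG ⟨f, fun i => (LI_iff G f i).mpr ?_⟩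
          intro u v hadj hcol
          by_cases hua : u = a
          · subst hua
            rcases (hmema v).mp hadj with h' | h'
            · rw [h'] at hcol ⊢
              rw [fab] at hcol
              rw [← hcol, Dza, Dzb]
              decide
            · rw [Set.mem_singleton_iff.mp h'] at hcol ⊢
              rw [fad] at hcol
              rw [← hcol, Dza, Dzd]
              decide
          by_cases hub : u = b
          · subst hub
            rcases (hmemb v).mp hadj with h' | h'
            · rw [h'] at hcol ⊢
              rw [Sym2.eq_swap, fab] at hcol
              rw [← hcol, Dza, Dzb]
              decide
            · rw [Set.mem_singleton_iff.mp h'] at hcol ⊢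
              rw [fbc] at hcol
              rw [← hcol, Dxb, Dxc]
              decide
          by_cases huc : u = c
          · subst huc
            rcases (hmemc v).mp hadj with h' | h' | h'
            · rw [h'] at hcol ⊢
              rw [Sym2.eq_swap, fbc] at hcol
              rw [← hcol, Dxb, Dxc]
              decide
            · rw [h'] at hcol ⊢
              rw [fcd] at hcol
              rw [← hcol, Dxc, Dxd]
              decide
            · rw [Set.mem_singleton_iff.mp h'] at hcol ⊢
              rw [fce, hce'] at hcol
              rw [← hcol, Dxc, Dxe]
              decide
          by_cases hud : u = d
          · subst hud
            rcases (hmemd v).mp hadj with h' | h' | h'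
            · rw [h'] at hcol ⊢
              rw [Sym2.eq_swap, fad] at hcol
              rw [← hcol, Dza, Dzd]
              decide
            · rw [h'] at hcol ⊢
              rw [Sym2.eq_swap, fcd] at hcol
              rw [← hcol, Dxc, Dxd]
              decide
            · rw [Set.mem_singleton_iff.mp h'] at hcol ⊢
              rw [fde] at hcol
              rw [← hcol, Dyd, Dye]
              decide
          by_cases hue : u = e
          · subst hue
            rcases (hmeme v).mp hadj with h' | h' | h'
            · rw [h'] at hcol ⊢
              rw [Sym2.eq_swap, fce, hce'] at hcol
              rw [← hcol, Dxc, Dxe]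
              decide
            · rw [h'] at hcol ⊢
              rw [Sym2.eq_swap, fde] at hcol
              rw [← hcol, Dyd, Dye]
              decide
            · rw [Set.mem_singleton_iff.mp h'] at hcol ⊢
              rw [feg, hgy] at hcol
              rw [← hcol, Dye, hfarDdG1 g hga hgb hgc hgd]
              exact fun h => hgy2 h.symm
          by_cases hva : v = a
          · rw [hva] at hadj
            rcases (hmema u).mp hadj.symm with h' | h'
            · exact absurd h' hub
            · exact absurd (Set.mem_singleton_iff.mp h') hud
          by_cases hvb : v = b
          · rw [hvb] at hadj
            rcases (hmemb u).mp hadj.symm with h' | h'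
            · exact absurd h' hua
            · exact absurd (Set.mem_singleton_iff.mp h') huc
          by_cases hvc : v = c
          · rw [hvc] at hadj
            rcases (hmemc u).mp hadj.symm with h' | h' | h'
            · exact absurd h' hub
            · exact absurd h' hud
            · exact absurd (Set.mem_singleton_iff.mp h') hue
          by_cases hvd : v = d
          · rw [hvd] at hadj
            rcases (hmemd u).mp hadj.symm with h' | h' | h'
            · exact absurd h' hua
            · exact absurd h' huc
            · exact absurd (Set.mem_singleton_iff.mp h') hue
          by_cases hve : v = e
          · rw [hve] at hadj hcol ⊢
            rcases (hmeme u).mp hadj.symm with h' | h' | h'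
            · exact absurd h' huc
            · exact absurd h' hud
            · rw [Set.mem_singleton_iff.mp h'] at hcol ⊢
              rw [show s(g, e) = s(e, g) from Sym2.eq_swap, feg, hgy] at hcol
              rw [← hcol, Dye, hfarDdG1 g hga hgb hgc hgd]
              exact hgy2
          · have hG'uv : G'.Adj u v := (hfarG'adj u hua hub huc hud v).mpr hadj
            rw [fother3 u v hua hub huc hud] at hcol
            rw [hfarDdG1 u hua hub huc hud, hfarDdG1 v hva hvb hvc hvd]
            exact (LI_iff G' co' i).mp (hco' i) u v hG'uv hcol

        · -- X2 : cd and de share a color, ce has another color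
          have hceLI := (LI_iff G' co' (co' s(c, e))).mp (hco' _) c e hG'ce rfl
          have Dyc' : Dd G' co' (co' s(c, e)) c = 1 := by
            have h : ∀ w, (G'.Adj c w ∧ co' s(c, w) = co' s(c, e)) ↔ w ∈ ({e} : Set V) := by
              intro w
              constructor
              · rintro ⟨hadj, hc'⟩
                rcases (hN'c w).mp hadj with h' | h'
                · rw [h'] at hc'
                  exact absurd hc'.symm hce'
                · exact h'
              · intro hw
                rw [Set.mem_singleton_iff.mp hw]
                exact ⟨hG'ce, rfl⟩
            rw [Dd_explicit h]
            exact Set.ncard_singleton _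
          have hgy : co' s(e, g) = co' s(c, e) := by
            by_contra hgy
            apply hceLI
            have h : ∀ w, (G'.Adj e w ∧ co' s(e, w) = co' s(c, e)) ↔ w ∈ ({c} : Set V) := by
              intro w
              constructor
              · rintro ⟨hadj, hc'⟩
                rcases (hN'e w).mp hadj with h' | h' | h'
                · simp [h']
                · rw [h', show s(e, d) = s(d, e) from Sym2.eq_swap, hde'] at hc'
                  exact absurd hc'.symm hce'
                · rw [Set.mem_singleton_iff.mp h'] at hc'
                  exact absurd hc' hgy
              · intro hw
                rw [Set.mem_singleton_iff.mp hw]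
                exact ⟨hG'ce.symm, by rw [Sym2.eq_swap]⟩
            rw [Dyc', Dd_explicit h, Set.ncard_singleton]
          have DyeG' : Dd G' co' (co' s(c, e)) e = 2 := by
            have h : ∀ w, (G'.Adj e w ∧ co' s(e, w) = co' s(c, e)) ↔ w ∈ ({c, g} : Set V) := by
              intro w
              constructor
              · rintro ⟨hadj, hc'⟩
                rcases (hN'e w).mp hadj with h' | h' | h'
                · simp [h']
                · rw [h', show s(e, d) = s(d, e) from Sym2.eq_swap, hde'] at hc'
                  exact absurd hc'.symm hce'
                · simp [Set.mem_singleton_iff.mp h']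
              · intro hw
                rcases hw with h' | h'
                · rw [h']
                  exact ⟨hG'ce.symm, by rw [Sym2.eq_swap]⟩
                · rw [Set.mem_singleton_iff.mp h']
                  exact ⟨hG'eg, hgy⟩
            rw [Dd_explicit h]
            exact Set.ncard_pair hgc.symm
          have hgy2 : Dd G' co' (co' s(c, e)) g ≠ 2 := by
            have h2 := (LI_iff G' co' (co' s(c, e))).mp (hco' _) e g hG'eg hgy
            rw [DyeG'] at h2
            exact fun h => h2 (by rw [h])
          obtain ⟨z, hzx, hzy⟩ := third3 (co' s(c, d)) (co' s(c, e)) (fun h => hce' h.symm)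
          set f : Sym2 V → Fin 3 := fun p =>
            if p = s(a, b) then z
            else if p = s(b, c) then z
            else if p = s(a, d) then co' s(c, d) else co' p with hf
          have fab : f s(a, b) = z := if_pos rfl
          have fbc : f s(b, c) = z := by
            rw [hf]
            simp only []
            rw [if_neg (sym2_ne (fun hh => nab hh.1.symm) (fun hh => hac hh.2.symm))]
            simp
          have fad : f s(a, d) = co' s(c, d) := by
            rw [hf]
            simp only []
            rw [if_neg (sym2_ne (fun hh => hbd hh.2.symm) (fun hh => nab hh.1)),
              if_neg (sym2_ne (fun hh => nab hh.1) (fun hh => hac hh.1))]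
            simp
          have fother3 : ∀ u w, u ≠ a → u ≠ b → u ≠ c → u ≠ d →
              f s(u, w) = co' s(u, w) := by
            intro u w h1 h2 h3 h4
            rw [hf]
            simp only []
            rw [if_neg (sym2_ne (fun hh => h1 hh.1) (fun hh => h2 hh.1)),
              if_neg (sym2_ne (fun hh => h2 hh.1) (fun hh => h3 hh.1)),
              if_neg (sym2_ne (fun hh => h1 hh.1) (fun hh => h4 hh.1))]
          have fcd : f s(c, d) = co' s(c, d) := by
            rw [hf]
            simp only []
            rw [if_neg (sym2_ne (fun hh => hac hh.1.symm) (fun hh => nbc hh.1.symm)),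
              if_neg (sym2_ne (fun hh => nbc hh.1.symm) (fun hh => hbd hh.2.symm)),
              if_neg (sym2_ne (fun hh => hac hh.1.symm) (fun hh => ncd hh.1))]
          have fce : f s(c, e) = co' s(c, e) := by
            rw [hf]
            simp only []
            rw [if_neg (sym2_ne (fun hh => hac hh.1.symm) (fun hh => nbc hh.1.symm)),
              if_neg (sym2_ne (fun hh => nbc hh.1.symm) (fun hh => neb hh.2)),
              if_neg (sym2_ne (fun hh => hac hh.1.symm) (fun hh => ncd hh.1))]
          have fde : f s(d, e) = co' s(d, e) := by
            rw [hf]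
            simp only []
            rw [if_neg (sym2_ne (fun hh => nda hh.1) (fun hh => hbd hh.1.symm)),
              if_neg (sym2_ne (fun hh => hbd hh.1.symm) (fun hh => ncd hh.1.symm)),
              if_neg (sym2_ne (fun hh => nda hh.1) (fun hh => hea hh.2))]
          have feg : f s(e, g) = co' s(e, g) := by
            rw [hf]
            simp only []
            rw [if_neg (sym2_ne (fun hh => hea hh.1) (fun hh => neb hh.1)),
              if_neg (sym2_ne (fun hh => neb hh.1) (fun hh => hec hh.1)),
              if_neg (sym2_ne (fun hh => hea hh.1) (fun hh => ned hh.1))]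
          have hfarDdG1 : ∀ u, u ≠ a → u ≠ b → u ≠ c → u ≠ d →
              ∀ i : Fin 3, Dd G f i u = Dd G' co' i u := by
            intro u h1 h2 h3 h4 i
            refine Dd_congr (fun w => ?_)
            rw [hfarG'adj u h1 h2 h3 h4 w, fother3 u w h1 h2 h3 h4]
          have Dza : Dd G f z a = 1 := by
            have h : ∀ w, (G.Adj a w ∧ f s(a, w) = z) ↔ w ∈ ({b} : Set V) := by
              intro w
              constructor
              · rintro ⟨hadj, hc'⟩
                rcases (hmema w).mp hadj with h' | h'
                · simp [h']
                · rw [Set.mem_singleton_iff.mp h', fad] at hc'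
                  exact absurd hc'.symm hzx
              · intro hw
                rw [Set.mem_singleton_iff.mp hw]
                exact ⟨hab, fab⟩
            rw [Dd_explicit h]
            exact Set.ncard_singleton _
          have Dzb : Dd G f z b = 2 := by
            have h : ∀ w, (G.Adj b w ∧ f s(b, w) = z) ↔ w ∈ ({a, c} : Set V) := by
              intro w
              constructor
              · rintro ⟨hadj, _⟩
                exact (hmemb w).mp hadj
              · intro hw
                rcases hw with h' | h'
                · rw [h']
                  exact ⟨hab.symm, by rw [Sym2.eq_swap]; exact fab⟩
                · rw [Set.mem_singleton_iff.mp h']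
                  exact ⟨hbc, fbc⟩
            rw [Dd_explicit h]
            exact Set.ncard_pair hac
          have Dzc : Dd G f z c = 1 := by
            have h : ∀ w, (G.Adj c w ∧ f s(c, w) = z) ↔ w ∈ ({b} : Set V) := by
              intro w
              constructor
              · rintro ⟨hadj, hc'⟩
                rcases (hmemc w).mp hadj with h' | h' | h'
                · simp [h']
                · rw [h', fcd] at hc'
                  exact absurd hc'.symm hzx
                · rw [Set.mem_singleton_iff.mp h', fce] at hc'
                  exact absurd hc'.symm hzy
              · intro hw
                rw [Set.mem_singleton_iff.mp hw]
                exact ⟨hbc.symm, by rw [Sym2.eq_swap]; exact fbc⟩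
            rw [Dd_explicit h]
            exact Set.ncard_singleton _
          have Dxa : Dd G f (co' s(c, d)) a = 1 := by
            have h : ∀ w, (G.Adj a w ∧ f s(a, w) = co' s(c, d)) ↔ w ∈ ({d} : Set V) := by
              intro w
              constructor
              · rintro ⟨hadj, hc'⟩
                rcases (hmema w).mp hadj with h' | h'
                · rw [h', fab] at hc'
                  exact absurd hc' hzx
                · exact h'
              · intro hw
                rw [Set.mem_singleton_iff.mp hw]
                exact ⟨hda.symm, fad⟩
            rw [Dd_explicit h]
            exact Set.ncard_singleton _
          have Dxd : Dd G f (co' s(c, d)) d = 3 := by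
            have h : ∀ w, (G.Adj d w ∧ f s(d, w) = co' s(c, d)) ↔ w ∈ ({a, c, e} : Set V) := by
              intro w
              constructor
              · rintro ⟨hadj, _⟩
                exact (hmemd w).mp hadj
              · intro hw
                rcases hw with h' | h' | h'
                · rw [h']
                  exact ⟨hda, by rw [Sym2.eq_swap]; exact fad⟩
                · rw [h']
                  exact ⟨hcd.symm, by rw [Sym2.eq_swap]; exact fcd⟩
                · rw [Set.mem_singleton_iff.mp h']
                  exact ⟨hde, by rw [fde]; exact hde'⟩
            rw [Dd_explicit h]
            exact ncard_triple hac hea.symm hec.symm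
          have Dxc : Dd G f (co' s(c, d)) c = 1 := by
            have h : ∀ w, (G.Adj c w ∧ f s(c, w) = co' s(c, d)) ↔ w ∈ ({d} : Set V) := by
              intro w
              constructor
              · rintro ⟨hadj, hc'⟩
                rcases (hmemc w).mp hadj with h' | h' | h'
                · rw [h', show s(c, b) = s(b, c) from Sym2.eq_swap, fbc] at hc'
                  exact absurd hc' hzx
                · exact h'
                · rw [Set.mem_singleton_iff.mp h', fce] at hc'
                  exact absurd hc' hce'
              · intro hw
                rw [Set.mem_singleton_iff.mp hw]
                exact ⟨hcd, fcd⟩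
            rw [Dd_explicit h]
            exact Set.ncard_singleton _
          have Dxe : Dd G f (co' s(c, d)) e = 1 := by
            have h : ∀ w, (G.Adj e w ∧ f s(e, w) = co' s(c, d)) ↔ w ∈ ({d} : Set V) := by
              intro w
              constructor
              · rintro ⟨hadj, hc'⟩
                rcases (hmeme w).mp hadj with h' | h' | h'
                · rw [h', show s(e, c) = s(c, e) from Sym2.eq_swap, fce] at hc'
                  exact absurd hc' hce'
                · exact h'
                · rw [Set.mem_singleton_iff.mp h', feg, hgy] at hc'
                  exact absurd hc' hce'
              · intro hw
                rw [Set.mem_singleton_iff.mp hw]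
                refine ⟨hde.symm, ?_⟩
                rw [Sym2.eq_swap, fde]
                exact hde'
            rw [Dd_explicit h]
            exact Set.ncard_singleton _
          have Dyc : Dd G f (co' s(c, e)) c = 1 := by
            have h : ∀ w, (G.Adj c w ∧ f s(c, w) = co' s(c, e)) ↔ w ∈ ({e} : Set V) := by
              intro w
              constructor
              · rintro ⟨hadj, hc'⟩
                rcases (hmemc w).mp hadj with h' | h' | h'
                · rw [h', show s(c, b) = s(b, c) from Sym2.eq_swap, fbc] at hc'
                  exact absurd hc' hzy
                · rw [h', fcd] at hc'
                  exact absurd hc'.symm hce'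
                · exact h'
              · intro hw
                rw [Set.mem_singleton_iff.mp hw]
                exact ⟨hce, fce⟩
            rw [Dd_explicit h]
            exact Set.ncard_singleton _
          have Dye : Dd G f (co' s(c, e)) e = 2 := by
            have h : ∀ w, (G.Adj e w ∧ f s(e, w) = co' s(c, e)) ↔ w ∈ ({c, g} : Set V) := by
              intro w
              constructor
              · rintro ⟨hadj, hc'⟩
                rcases (hmeme w).mp hadj with h' | h' | h'
                · simp [h']
                · rw [h', show s(e, d) = s(d, e) from Sym2.eq_swap, fde, hde'] at hc'
                  exact absurd hc'.symm hce'
                · simp [Set.mem_singleton_iff.mp h']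
              · intro hw
                rcases hw with h' | h'
                · rw [h']
                  exact ⟨hce.symm, by rw [Sym2.eq_swap]; exact fce⟩
                · rw [Set.mem_singleton_iff.mp h']
                  exact ⟨heg, by rw [feg]; exact hgy⟩
            rw [Dd_explicit h]
            exact Set.ncard_pair hgc.symm
          refine hG ⟨f, fun i => (LI_iff G f i).mpr ?_⟩
          intro u v hadj hcol
          by_cases hua : u = a
          · subst hua
            rcases (hmema v).mp hadj with h' | h'
            · rw [h'] at hcol ⊢
              rw [fab] at hcol
              rw [← hcol, Dza, Dzb]
              decide
            · rw [Set.mem_singleton_iff.mp h'] at hcol ⊢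
              rw [fad] at hcol
              rw [← hcol, Dxa, Dxd]
              decide
          by_cases hub : u = b
          · subst hub
            rcases (hmemb v).mp hadj with h' | h'
            · rw [h'] at hcol ⊢
              rw [Sym2.eq_swap, fab] at hcol
              rw [← hcol, Dza, Dzb]
              decide
            · rw [Set.mem_singleton_iff.mp h'] at hcol ⊢
              rw [fbc] at hcol
              rw [← hcol, Dzb, Dzc]
              decide
          by_cases huc : u = c
          · subst huc
            rcases (hmemc v).mp hadj with h' | h' | h'
            · rw [h'] at hcol ⊢
              rw [Sym2.eq_swap, fbc] at hcol
              rw [← hcol, Dzb, Dzc]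
              decide
            · rw [h'] at hcol ⊢
              rw [fcd] at hcol
              rw [← hcol, Dxc, Dxd]
              decide
            · rw [Set.mem_singleton_iff.mp h'] at hcol ⊢
              rw [fce] at hcol
              rw [← hcol, Dyc, Dye]
              decide
          by_cases hud : u = d
          · subst hud
            rcases (hmemd v).mp hadj with h' | h' | h'
            · rw [h'] at hcol ⊢
              rw [Sym2.eq_swap, fad] at hcol
              rw [← hcol, Dxa, Dxd]
              decide
            · rw [h'] at hcol ⊢
              rw [Sym2.eq_swap, fcd] at hcol
              rw [← hcol, Dxc, Dxd]
              decide
            · rw [Set.mem_singleton_iff.mp h'] at hcol ⊢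
              rw [fde, hde'] at hcol
              rw [← hcol, Dxd, Dxe]
              decide
          by_cases hue : u = e
          · subst hue
            rcases (hmeme v).mp hadj with h' | h' | h'
            · rw [h'] at hcol ⊢
              rw [Sym2.eq_swap, fce] at hcol
              rw [← hcol, Dyc, Dye]
              decide
            · rw [h'] at hcol ⊢
              rw [Sym2.eq_swap, fde, hde'] at hcol
              rw [← hcol, Dxd, Dxe]
              decide
            · rw [Set.mem_singleton_iff.mp h'] at hcol ⊢
              rw [feg, hgy] at hcol
              rw [← hcol, Dye, hfarDdG1 g hga hgb hgc hgd]
              exact fun h => hgy2 h.symm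
          by_cases hva : v = a
          · rw [hva] at hadj
            rcases (hmema u).mp hadj.symm with h' | h'
            · exact absurd h' hub
            · exact absurd (Set.mem_singleton_iff.mp h') hud
          by_cases hvb : v = b
          · rw [hvb] at hadj
            rcases (hmemb u).mp hadj.symm with h' | h'
            · exact absurd h' hua
            · exact absurd (Set.mem_singleton_iff.mp h') huc
          by_cases hvc : v = c
          · rw [hvc] at hadj
            rcases (hmemc u).mp hadj.symm with h' | h' | h'
            · exact absurd h' hub
            · exact absurd h' hud
            · exact absurd (Set.mem_singleton_iff.mp h') hue
          by_cases hvd : v = d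
          · rw [hvd] at hadj
            rcases (hmemd u).mp hadj.symm with h' | h' | h'
            · exact absurd h' hua
            · exact absurd h' huc
            · exact absurd (Set.mem_singleton_iff.mp h') hue
          by_cases hve : v = e
          · rw [hve] at hadj hcol ⊢
            rcases (hmeme u).mp hadj.symm with h' | h' | h'
            · exact absurd h' huc
            · exact absurd h' hud
            · rw [Set.mem_singleton_iff.mp h'] at hcol ⊢
              rw [show s(g, e) = s(e, g) from Sym2.eq_swap, feg, hgy] at hcol
              rw [← hcol, Dye, hfarDdG1 g hga hgb hgc hgd]
              exact hgy2
          · have hG'uv : G'.Adj u v := (hfarG'adj u hua hub huc hud v).mpr hadj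
            rw [fother3 u v hua hub huc hud] at hcol
            rw [hfarDdG1 u hua hub huc hud, hfarDdG1 v hva hvb hvc hvd]
            exact (LI_iff G' co' i).mp (hco' i) u v hG'uv hcol

        · -- impossible : neither
          exfalso
          apply hcdLI
          have h1 : ∀ w, (G'.Adj c w ∧ co' s(c, w) = co' s(c, d)) ↔ w ∈ ({d} : Set V) := by
            intro w
            constructor
            · rintro ⟨hadj, hc'⟩
              rcases (hN'c w).mp hadj with h' | h'
              · simp [h']
              · rw [Set.mem_singleton_iff.mp h'] at hc'
                exact absurd hc' hce'
            · intro hw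
              rw [Set.mem_singleton_iff.mp hw]
              exact ⟨hG'cd, rfl⟩
          have h2 : ∀ w, (G'.Adj d w ∧ co' s(d, w) = co' s(c, d)) ↔ w ∈ ({c} : Set V) := by
            intro w
            constructor
            · rintro ⟨hadj, hc'⟩
              rcases (hN'd w).mp hadj with h' | h'
              · simp [h']
              · rw [Set.mem_singleton_iff.mp h'] at hc'
                exact absurd hc' hde'
            · intro hw
              rw [Set.mem_singleton_iff.mp hw]
              exact ⟨(hN'd c).mpr (by simp), by rw [Sym2.eq_swap]⟩
          rw [Dd_explicit h1, Dd_explicit h2, Set.ncard_singleton, Set.ncard_singleton]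


      · -- branch 2 : delete all six edges among a,b,c,d,e
        set S6 : Set (Sym2 V) :=
          {s(a, b), s(a, d), s(b, c), s(c, d), s(c, e), s(d, e)} with hS6
        set H : SimpleGraph V := G.deleteEdges S6 with hH
        have hHadj : ∀ u w, H.Adj u w ↔ G.Adj u w ∧ s(u, w) ∉ S6 := fun u w => by
          rw [hH, SimpleGraph.deleteEdges_adj]
        have hIaH : ∀ w, ¬H.Adj a w := by
          intro w h
          rw [hHadj] at h
          rcases (hmema w).mp h.1 with h' | h'
          · rw [h'] at h; exact h.2 (by simp [hS6])
          · rw [Set.mem_singleton_iff.mp h'] at h; exact h.2 (by simp [hS6])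
        have hIbH : ∀ w, ¬H.Adj b w := by
          intro w h
          rw [hHadj] at h
          rcases (hmemb w).mp h.1 with h' | h'
          · rw [h'] at h; exact h.2 (by simp [hS6, Sym2.eq_swap])
          · rw [Set.mem_singleton_iff.mp h'] at h
            exact h.2 (by simp [hS6, show s(b, c) = s(b, c) from rfl])
        have hIcH : ∀ w, ¬H.Adj c w := by
          intro w h
          rw [hHadj] at h
          rcases (hmemc w).mp h.1 with h' | h' | h'
          · rw [h'] at h; exact h.2 (by simp [hS6, Sym2.eq_swap])
          · rw [h'] at h; exact h.2 (by simp [hS6])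
          · rw [Set.mem_singleton_iff.mp h'] at h; exact h.2 (by simp [hS6])
        have hIdH : ∀ w, ¬H.Adj d w := by
          intro w h
          rw [hHadj] at h
          rcases (hmemd w).mp h.1 with h' | h' | h'
          · rw [h'] at h; exact h.2 (by simp [hS6, Sym2.eq_swap])
          · rw [h'] at h; exact h.2 (by simp [hS6, Sym2.eq_swap])
          · rw [Set.mem_singleton_iff.mp h'] at h; exact h.2 (by simp [hS6])
        have hegS6 : s(e, g) ∉ S6 := by
          simp [hS6, Sym2.eq_iff, hea, neb, hec, ned, hgc, hgd, hga, hgb]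
        have hNHe : ∀ w, H.Adj e w ↔ w ∈ ({g} : Set V) := by
          intro w
          constructor
          · intro h
            rw [hHadj] at h
            rcases (hmeme w).mp h.1 with h' | h' | h'
            · rw [h'] at h; exact absurd (by simp [hS6, Sym2.eq_swap] : s(e, c) ∈ S6) h.2
            · rw [h'] at h; exact absurd (by simp [hS6, Sym2.eq_swap] : s(e, d) ∈ S6) h.2
            · exact h'
          · intro hw
            rw [Set.mem_singleton_iff.mp hw, hHadj]
            exact ⟨heg, hegS6⟩
        have hfarHadj : ∀ u, u ≠ a → u ≠ b → u ≠ c → u ≠ d → u ≠ e →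
            ∀ w, H.Adj u w ↔ G.Adj u w := by
          intro u h1 h2 h3 h4 h5 w
          rw [hHadj]
          constructor
          · exact fun h => h.1
          · intro h
            refine ⟨h, ?_⟩
            simp [hS6, Sym2.eq_iff, h1, h2, h3, h4, h5]
        have hfarDdH : ∀ u, u ≠ a → u ≠ b → u ≠ c → u ≠ d → u ≠ e →
            ∀ (i : Fin k), Dd H co i u = Dd G co i u := by
          intro u h1 h2 h3 h4 h5 i
          refine Dd_congr (fun w => ?_)
          rw [hfarHadj u h1 h2 h3 h4 h5 w]
        have hHeg : H.Adj e g := (hNHe g).mpr rfl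
        have hDHeτ : Dd H co (co s(e, g)) e = 1 := by
          have h : ∀ w, (H.Adj e w ∧ co s(e, w) = co s(e, g)) ↔ w ∈ ({g} : Set V) := by
            intro w
            constructor
            · rintro ⟨hadj, _⟩
              exact (hNHe w).mp hadj
            · intro hw
              rw [Set.mem_singleton_iff.mp hw]
              exact ⟨hHeg, rfl⟩
          rw [Dd_explicit h]
          exact Set.ncard_singleton _
        have hdecH : Decomposable H := by
          refine ⟨k, co, fun i => (LI_iff H co i).mpr ?_⟩
          intro u v hadj hcol
          by_cases hua : u = a
          · rw [hua] at hadj; exact absurd hadj (hIaH v)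
          by_cases hub : u = b
          · rw [hub] at hadj; exact absurd hadj (hIbH v)
          by_cases huc : u = c
          · rw [huc] at hadj; exact absurd hadj (hIcH v)
          by_cases hud : u = d
          · rw [hud] at hadj; exact absurd hadj (hIdH v)
          by_cases hue : u = e
          · subst hue
            have hv : v = g := Set.mem_singleton_iff.mp ((hNHe v).mp hadj)
            rw [hv] at hcol ⊢
            rw [← hcol, hDHeτ, hfarDdH g hga hgb hgc hgd hge]
            exact fun h => hng h.symm
          by_cases hva : v = a
          · rw [hva] at hadj; exact absurd hadj.symm (hIaH u)
          by_cases hvb : v = b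
          · rw [hvb] at hadj; exact absurd hadj.symm (hIbH u)
          by_cases hvc : v = c
          · rw [hvc] at hadj; exact absurd hadj.symm (hIcH u)
          by_cases hvd : v = d
          · rw [hvd] at hadj; exact absurd hadj.symm (hIdH u)
          by_cases hve : v = e
          · rw [hve] at hadj hcol ⊢
            have hu : u = g := Set.mem_singleton_iff.mp ((hNHe u).mp hadj.symm)
            rw [hu] at hcol ⊢
            rw [show s(g, e) = s(e, g) from Sym2.eq_swap] at hcol
            rw [← hcol, hfarDdH g hga hgb hgc hgd hge, hDHeτ]
            exact hng
          · rw [hfarDdH u hua hub huc hud hue, hfarDdH v hva hvb hvc hvd hve]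
            exact (LI_iff G co i).mp (hco i) u v ((hHadj u v).mp hadj).1 hcol
        have hcfH : ClawFree H := by
          rw [hH]
          refine clawfree_deleteEdges G S6 hclaw ?_
          intro x y hxy hmem
          rw [← hH]
          rcases hmem with h | h | h | h | h | h
          · rcases Sym2.eq_iff.mp h with ⟨rfl, rfl⟩ | ⟨rfl, rfl⟩
            · exact Or.inl hIaH
            · exact Or.inl hIbH
          · rcases Sym2.eq_iff.mp h with ⟨rfl, rfl⟩ | ⟨rfl, rfl⟩
            · exact Or.inl hIaH
            · exact Or.inl hIdH
          · rcases Sym2.eq_iff.mp h with ⟨rfl, rfl⟩ | ⟨rfl, rfl⟩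
            · exact Or.inl hIbH
            · exact Or.inl hIcH
          · rcases Sym2.eq_iff.mp h with ⟨rfl, rfl⟩ | ⟨rfl, rfl⟩
            · exact Or.inl hIcH
            · exact Or.inl hIdH
          · rcases Sym2.eq_iff.mp h with ⟨rfl, rfl⟩ | ⟨rfl, rfl⟩
            · exact Or.inl hIcH
            · exact Or.inr hIcH
          · rcases Sym2.eq_iff.mp (Set.mem_singleton_iff.mp h) with ⟨rfl, rfl⟩ | ⟨rfl, rfl⟩
            · exact Or.inl hIdH
            · exact Or.inr hIdH
        have hmdH : MaxDegreeLE H 3 := maxdeg_mono (SimpleGraph.deleteEdges_le S6) hdeg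
        have hltH : H.edgeSet.ncard < G.edgeSet.ncard := by
          rw [hH]
          exact edge_lt hab (by simp [hS6])
        obtain ⟨co'', hco''⟩ := transfer G hmin H hdecH hcfH hmdH hltH
        obtain ⟨s', r', hst, hrt, hsr⟩ := triple3 (co'' s(e, g))
        set t : Fin 3 := co'' s(e, g) with ht
        have hDHet : Dd H co'' t e = 1 := by
          have h : ∀ w, (H.Adj e w ∧ co'' s(e, w) = t) ↔ w ∈ ({g} : Set V) := by
            intro w
            constructor
            · rintro ⟨hadj, _⟩
              exact (hNHe w).mp hadj
            · intro hw
              rw [Set.mem_singleton_iff.mp hw]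
              exact ⟨hHeg, rfl⟩
          rw [Dd_explicit h]
          exact Set.ncard_singleton _
        have hgt : Dd H co'' t g ≠ 1 := by
          have := (LI_iff H co'' t).mp (hco'' t) e g hHeg rfl
          rw [hDHet] at this
          exact fun h => this (by rw [h])
        set f : Sym2 V → Fin 3 := fun p =>
          if p = s(a, b) then t
          else if p = s(b, c) then t
          else if p = s(c, d) then r'
          else if p = s(a, d) then r'
          else if p = s(c, e) then s'
          else if p = s(d, e) then s' else co'' p with hf
        have fab : f s(a, b) = t := if_pos rfl
        have fbc : f s(b, c) = t := by
          rw [hf]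
          simp only []
          rw [if_neg (sym2_ne (fun hh => nab hh.1.symm) (fun hh => hac hh.2.symm))]
          simp
        have fcd : f s(c, d) = r' := by
          rw [hf]
          simp only []
          rw [if_neg (sym2_ne (fun hh => hac hh.1.symm) (fun hh => nbc hh.1.symm)),
            if_neg (sym2_ne (fun hh => nbc hh.1.symm) (fun hh => hbd hh.2.symm))]
          simp
        have fad : f s(a, d) = r' := by
          rw [hf]
          simp only []
          rw [if_neg (sym2_ne (fun hh => hbd hh.2.symm) (fun hh => nab hh.1)),
            if_neg (sym2_ne (fun hh => nab hh.1) (fun hh => hac hh.1)),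
            if_neg (sym2_ne (fun hh => hac hh.1) (fun hh => nda hh.1.symm))]
          simp
        have fce : f s(c, e) = s' := by
          rw [hf]
          simp only []
          rw [if_neg (sym2_ne (fun hh => hac hh.1.symm) (fun hh => nbc hh.1.symm)),
            if_neg (sym2_ne (fun hh => nbc hh.1.symm) (fun hh => neb hh.2)),
            if_neg (sym2_ne (fun hh => ned hh.2) (fun hh => ncd hh.1)),
            if_neg (sym2_ne (fun hh => hac hh.1.symm) (fun hh => ncd hh.1))]
          simp
        have fde : f s(d, e) = s' := by
          rw [hf]
          simp only []
          rw [if_neg (sym2_ne (fun hh => nda hh.1) (fun hh => hbd hh.1.symm)),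
            if_neg (sym2_ne (fun hh => hbd hh.1.symm) (fun hh => ncd hh.1.symm)),
            if_neg (sym2_ne (fun hh => ncd hh.1.symm) (fun hh => hec hh.2)),
            if_neg (sym2_ne (fun hh => nda hh.1) (fun hh => hea hh.2)),
            if_neg (sym2_ne (fun hh => ncd hh.1.symm) (fun hh => hec hh.2))]
          simp
        have feg : f s(e, g) = t := by
          rw [hf]
          simp only []
          rw [if_neg (sym2_ne (fun hh => hea hh.1) (fun hh => neb hh.1)),
            if_neg (sym2_ne (fun hh => neb hh.1) (fun hh => hec hh.1)),
            if_neg (sym2_ne (fun hh => hec hh.1) (fun hh => ned hh.1)),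
            if_neg (sym2_ne (fun hh => hea hh.1) (fun hh => ned hh.1)),
            if_neg (sym2_ne (fun hh => hec hh.1) (fun hh => hgc hh.2)),
            if_neg (sym2_ne (fun hh => ned hh.1) (fun hh => hgd hh.2))]
        have fother : ∀ u w, u ≠ a → u ≠ b → u ≠ c → u ≠ d → u ≠ e →
            f s(u, w) = co'' s(u, w) := by
          intro u w h1 h2 h3 h4 h5
          rw [hf]
          simp only []
          rw [if_neg (sym2_ne (fun hh => h1 hh.1) (fun hh => h2 hh.1)),
            if_neg (sym2_ne (fun hh => h2 hh.1) (fun hh => h3 hh.1)),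
            if_neg (sym2_ne (fun hh => h3 hh.1) (fun hh => h4 hh.1)),
            if_neg (sym2_ne (fun hh => h1 hh.1) (fun hh => h4 hh.1)),
            if_neg (sym2_ne (fun hh => h3 hh.1) (fun hh => h5 hh.1)),
            if_neg (sym2_ne (fun hh => h4 hh.1) (fun hh => h5 hh.1))]
        have hfarDdG : ∀ u, u ≠ a → u ≠ b → u ≠ c → u ≠ d → u ≠ e →
            ∀ (i : Fin 3), Dd G f i u = Dd H co'' i u := by
          intro u h1 h2 h3 h4 h5 i
          refine Dd_congr (fun w => ?_)
          rw [hfarHadj u h1 h2 h3 h4 h5 w, fother u w h1 h2 h3 h4 h5]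
        have Dta : Dd G f t a = 1 := by
          have h : ∀ w, (G.Adj a w ∧ f s(a, w) = t) ↔ w ∈ ({b} : Set V) := by
            intro w
            constructor
            · rintro ⟨hadj, hc'⟩
              rcases (hmema w).mp hadj with h' | h'
              · simp [h']
              · rw [Set.mem_singleton_iff.mp h', fad] at hc'
                exact absurd hc' hrt
            · intro hw
              rw [Set.mem_singleton_iff.mp hw]
              exact ⟨hab, fab⟩
          rw [Dd_explicit h]
          exact Set.ncard_singleton _
        have Dtb : Dd G f t b = 2 := by
          have h : ∀ w, (G.Adj b w ∧ f s(b, w) = t) ↔ w ∈ ({a, c} : Set V) := by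
            intro w
            constructor
            · rintro ⟨hadj, _⟩
              exact (hmemb w).mp hadj
            · intro hw
              rcases hw with h' | h'
              · rw [h']
                exact ⟨hab.symm, by rw [Sym2.eq_swap]; exact fab⟩
              · rw [Set.mem_singleton_iff.mp h']
                exact ⟨hbc, fbc⟩
          rw [Dd_explicit h]
          exact Set.ncard_pair hac
        have Dtc : Dd G f t c = 1 := by
          have h : ∀ w, (G.Adj c w ∧ f s(c, w) = t) ↔ w ∈ ({b} : Set V) := by
            intro w
            constructor
            · rintro ⟨hadj, hc'⟩
              rcases (hmemc w).mp hadj with h' | h' | h'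
              · simp [h']
              · rw [h', fcd] at hc'
                exact absurd hc' hrt
              · rw [Set.mem_singleton_iff.mp h', fce] at hc'
                exact absurd hc' hst
            · intro hw
              rw [Set.mem_singleton_iff.mp hw]
              exact ⟨hbc.symm, by rw [Sym2.eq_swap]; exact fbc⟩
          rw [Dd_explicit h]
          exact Set.ncard_singleton _
        have Dte : Dd G f t e = 1 := by
          have h : ∀ w, (G.Adj e w ∧ f s(e, w) = t) ↔ w ∈ ({g} : Set V) := by
            intro w
            constructor
            · rintro ⟨hadj, hc'⟩
              rcases (hmeme w).mp hadj with h' | h' | h'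
              · rw [h', show s(e, c) = s(c, e) from Sym2.eq_swap, fce] at hc'
                exact absurd hc' hst
              · rw [h', show s(e, d) = s(d, e) from Sym2.eq_swap, fde] at hc'
                exact absurd hc' hst
              · exact h'
            · intro hw
              rw [Set.mem_singleton_iff.mp hw]
              exact ⟨heg, feg⟩
          rw [Dd_explicit h]
          exact Set.ncard_singleton _
        have Dra : Dd G f r' a = 1 := by
          have h : ∀ w, (G.Adj a w ∧ f s(a, w) = r') ↔ w ∈ ({d} : Set V) := by
            intro w
            constructor
            · rintro ⟨hadj, hc'⟩
              rcases (hmema w).mp hadj with h' | h'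
              · rw [h', fab] at hc'
                exact absurd hc'.symm hrt
              · exact h'
            · intro hw
              rw [Set.mem_singleton_iff.mp hw]
              exact ⟨hda.symm, fad⟩
          rw [Dd_explicit h]
          exact Set.ncard_singleton _
        have Drc : Dd G f r' c = 1 := by
          have h : ∀ w, (G.Adj c w ∧ f s(c, w) = r') ↔ w ∈ ({d} : Set V) := by
            intro w
            constructor
            · rintro ⟨hadj, hc'⟩
              rcases (hmemc w).mp hadj with h' | h' | h'
              · rw [h', show s(c, b) = s(b, c) from Sym2.eq_swap, fbc] at hc'
                exact absurd hc'.symm hrt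
              · exact h'
              · rw [Set.mem_singleton_iff.mp h', fce] at hc'
                exact absurd hc' hsr
            · intro hw
              rw [Set.mem_singleton_iff.mp hw]
              exact ⟨hcd, fcd⟩
          rw [Dd_explicit h]
          exact Set.ncard_singleton _
        have Drd : Dd G f r' d = 2 := by
          have h : ∀ w, (G.Adj d w ∧ f s(d, w) = r') ↔ w ∈ ({a, c} : Set V) := by
            intro w
            constructor
            · rintro ⟨hadj, hc'⟩
              rcases (hmemd w).mp hadj with h' | h' | h'
              · simp [h']
              · simp [h']
              · rw [Set.mem_singleton_iff.mp h', fde] at hc'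
                exact absurd hc' hsr
            · intro hw
              rcases hw with h' | h'
              · rw [h']
                exact ⟨hda, by rw [Sym2.eq_swap]; exact fad⟩
              · rw [Set.mem_singleton_iff.mp h']
                exact ⟨hcd.symm, by rw [Sym2.eq_swap]; exact fcd⟩
          rw [Dd_explicit h]
          exact Set.ncard_pair hac
        have Dsc : Dd G f s' c = 1 := by
          have h : ∀ w, (G.Adj c w ∧ f s(c, w) = s') ↔ w ∈ ({e} : Set V) := by
            intro w
            constructor
            · rintro ⟨hadj, hc'⟩
              rcases (hmemc w).mp hadj with h' | h' | h'
              · rw [h', show s(c, b) = s(b, c) from Sym2.eq_swap, fbc] at hc'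
                exact absurd hc'.symm hst
              · rw [h', fcd] at hc'
                exact absurd hc'.symm hsr
              · exact h'
            · intro hw
              rw [Set.mem_singleton_iff.mp hw]
              exact ⟨hce, fce⟩
          rw [Dd_explicit h]
          exact Set.ncard_singleton _
        have Dsd : Dd G f s' d = 1 := by
          have h : ∀ w, (G.Adj d w ∧ f s(d, w) = s') ↔ w ∈ ({e} : Set V) := by
            intro w
            constructor
            · rintro ⟨hadj, hc'⟩
              rcases (hmemd w).mp hadj with h' | h' | h'
              · rw [h', show s(d, a) = s(a, d) from Sym2.eq_swap, fad] at hc'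
                exact absurd hc'.symm hsr
              · rw [h', show s(d, c) = s(c, d) from Sym2.eq_swap, fcd] at hc'
                exact absurd hc'.symm hsr
              · exact h'
            · intro hw
              rw [Set.mem_singleton_iff.mp hw]
              exact ⟨hde, fde⟩
          rw [Dd_explicit h]
          exact Set.ncard_singleton _
        have Dse : Dd G f s' e = 2 := by
          have h : ∀ w, (G.Adj e w ∧ f s(e, w) = s') ↔ w ∈ ({c, d} : Set V) := by
            intro w
            constructor
            · rintro ⟨hadj, hc'⟩
              rcases (hmeme w).mp hadj with h' | h' | h'
              · simp [h']
              · simp [h']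
              · rw [Set.mem_singleton_iff.mp h', feg] at hc'
                exact absurd hc'.symm hst
            · intro hw
              rcases hw with h' | h'
              · rw [h']
                exact ⟨hce.symm, by rw [Sym2.eq_swap]; exact fce⟩
              · rw [Set.mem_singleton_iff.mp h']
                exact ⟨hde.symm, by rw [Sym2.eq_swap]; exact fde⟩
          rw [Dd_explicit h]
          exact Set.ncard_pair ncd
        refine hG ⟨f, fun i => (LI_iff G f i).mpr ?_⟩
        intro u v hadj hcol
        by_cases hua : u = a
        · subst hua
          rcases (hmema v).mp hadj with h' | h'
          · rw [h'] at hcol ⊢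
            rw [fab] at hcol
            rw [← hcol, Dta, Dtb]
            decide
          · rw [Set.mem_singleton_iff.mp h'] at hcol ⊢
            rw [fad] at hcol
            rw [← hcol, Dra, Drd]
            decide
        by_cases hub : u = b
        · subst hub
          rcases (hmemb v).mp hadj with h' | h'
          · rw [h'] at hcol ⊢
            rw [Sym2.eq_swap, fab] at hcol
            rw [← hcol, Dta, Dtb]
            decide
          · rw [Set.mem_singleton_iff.mp h'] at hcol ⊢
            rw [fbc] at hcol
            rw [← hcol, Dtb, Dtc]
            decide
        by_cases huc : u = c
        · subst huc
          rcases (hmemc v).mp hadj with h' | h' | h'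
          · rw [h'] at hcol ⊢
            rw [Sym2.eq_swap, fbc] at hcol
            rw [← hcol, Dtb, Dtc]
            decide
          · rw [h'] at hcol ⊢
            rw [fcd] at hcol
            rw [← hcol, Drc, Drd]
            decide
          · rw [Set.mem_singleton_iff.mp h'] at hcol ⊢
            rw [fce] at hcol
            rw [← hcol, Dsc, Dse]
            decide
        by_cases hud : u = d
        · subst hud
          rcases (hmemd v).mp hadj with h' | h' | h'
          · rw [h'] at hcol ⊢
            rw [Sym2.eq_swap, fad] at hcol
            rw [← hcol, Dra, Drd]
            decide
          · rw [h'] at hcol ⊢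
            rw [Sym2.eq_swap, fcd] at hcol
            rw [← hcol, Drc, Drd]
            decide
          · rw [Set.mem_singleton_iff.mp h'] at hcol ⊢
            rw [fde] at hcol
            rw [← hcol, Dsd, Dse]
            decide
        by_cases hue : u = e
        · subst hue
          rcases (hmeme v).mp hadj with h' | h' | h'
          · rw [h'] at hcol ⊢
            rw [Sym2.eq_swap, fce] at hcol
            rw [← hcol, Dsc, Dse]
            decide
          · rw [h'] at hcol ⊢
            rw [Sym2.eq_swap, fde] at hcol
            rw [← hcol, Dsd, Dse]
            decide
          · rw [Set.mem_singleton_iff.mp h'] at hcol ⊢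
            rw [feg] at hcol
            rw [← hcol, Dte, hfarDdG g hga hgb hgc hgd hge]
            exact fun h => hgt h.symm
        by_cases hva : v = a
        · rw [hva] at hadj
          rcases (hmema u).mp hadj.symm with h' | h'
          · exact absurd h' hub
          · exact absurd (Set.mem_singleton_iff.mp h') hud
        by_cases hvb : v = b
        · rw [hvb] at hadj
          rcases (hmemb u).mp hadj.symm with h' | h'
          · exact absurd h' hua
          · exact absurd (Set.mem_singleton_iff.mp h') huc
        by_cases hvc : v = c
        · rw [hvc] at hadj
          rcases (hmemc u).mp hadj.symm with h' | h' | h'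
          · exact absurd h' hub
          · exact absurd h' hud
          · exact absurd (Set.mem_singleton_iff.mp h') hue
        by_cases hvd : v = d
        · rw [hvd] at hadj
          rcases (hmemd u).mp hadj.symm with h' | h' | h'
          · exact absurd h' hua
          · exact absurd h' huc
          · exact absurd (Set.mem_singleton_iff.mp h') hue
        by_cases hve : v = e
        · rw [hve] at hadj hcol ⊢
          rcases (hmeme u).mp hadj.symm with h' | h' | h'
          · exact absurd h' huc
          · exact absurd h' hud
          · rw [Set.mem_singleton_iff.mp h'] at hcol ⊢
            rw [show s(g, e) = s(e, g) from Sym2.eq_swap, feg] at hcol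
            rw [← hcol, Dte, hfarDdG g hga hgb hgc hgd hge]
            exact hgt
        · have hGadj : G.Adj u v := hadj
          have hHadj' : H.Adj u v := (hfarHadj u hua hub huc hud hue v).mpr hGadj
          rw [fother u v hua hub huc hud hue] at hcol
          rw [hfarDdG u hua hub huc hud hue, hfarDdG v hva hvb hvc hvd hve]
          exact (LI_iff H co'' i).mp (hco'' i) u v hHadj' hcol
end

section
/- Let k ≥ 2 and let G be the graph consisting of two adjacent vertices u and v joined, in addition to the edge uv, by k internally disjoint paths, where the i-th path has length 4t_i + 1 for some integer t_i ≥ 1. Then χ'_irr(G) = 3; in particular, G admits no locally irregular edge-coloring using at most 2 colors. -/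
/-- The graph consisting of two adjacent vertices `u = Sum.inl true` and `v = Sum.inl false`
joined, in addition to the edge `uv`, by `k` internally disjoint paths, where the `i`-th
path has `4 * t i` internal vertices, i.e. length `4 * t i + 1`. -/
def multiPathGraph (k : ℕ) (t : Fin k → ℕ) :
    SimpleGraph (Bool ⊕ (Σ i : Fin k, Fin (4 * t i))) :=
  SimpleGraph.fromRel (fun x y =>
    match x, y with
    | Sum.inl a, Sum.inl b => a ≠ b
    | Sum.inl true, Sum.inr ⟨_, j⟩ => (j : ℕ) = 0
    | Sum.inl false, Sum.inr ⟨i, j⟩ => (j : ℕ) = 4 * t i - 1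
    | Sum.inr ⟨i, j⟩, Sum.inr ⟨i', j'⟩ => i = i' ∧ (j : ℕ) + 1 = (j' : ℕ)
    | Sum.inr _, Sum.inl _ => False)

namespace MPG

open SimpleGraph Sum

variable {k : ℕ} {t : Fin k → ℕ}

abbrev VV (k : ℕ) (t : Fin k → ℕ) := Bool ⊕ (Σ i : Fin k, Fin (4 * t i))

/-- internal vertex `j` of path `i` (junk value if out of range) -/
def wn (i : Fin k) (j : ℕ) : VV k t :=
  if h : j < 4 * t i then inr ⟨i, ⟨j, h⟩⟩ else inl true

lemma inr_eq_wn (i : Fin k) (jf : Fin (4 * t i)) : (inr ⟨i, jf⟩ : VV k t) = wn i jf.1 := by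
  simp [wn, jf.2]

lemma wn_inj {i : Fin k} {j j' : ℕ} (hj : j < 4 * t i) (hj' : j' < 4 * t i)
    (h : (wn i j : VV k t) = wn i j') : j = j' := by
  simp [wn, hj, hj'] at h; exact h

lemma wn_eq_iff {i i' : Fin k} {j j' : ℕ} (hj : j < 4 * t i) (hj' : j' < 4 * t i') :
    (wn i j : VV k t) = wn i' j' ↔ i = i' ∧ j = j' := by
  constructor
  · intro h
    simp only [wn, dif_pos hj, dif_pos hj', Sum.inr.injEq, Sigma.mk.inj_iff] at h
    obtain ⟨rfl, h2⟩ := h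
    exact ⟨rfl, by simpa using h2⟩
  · rintro ⟨rfl, rfl⟩; rfl

lemma wn_ne_u {i : Fin k} {j : ℕ} (hj : j < 4 * t i) : (wn i j : VV k t) ≠ inl true := by
  simp [wn, hj]

lemma wn_ne_v {i : Fin k} {j : ℕ} (hj : j < 4 * t i) : (wn i j : VV k t) ≠ inl false := by
  simp [wn, hj]


def lft (i : Fin k) (j : ℕ) : VV k t := if j = 0 then inl true else wn i (j - 1)
def rgt (i : Fin k) (j : ℕ) : VV k t := if j + 1 = 4 * t i then inl false else wn i (j + 1)

def pedge (i : Fin k) (m : ℕ) : Sym2 (VV k t) :=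
  if m = 0 then s(Sum.inl true, wn i 0)
  else if m < 4 * t i then s(wn i (m - 1), wn i m)
  else s(wn i (4 * t i - 1), Sum.inl false)

lemma adj_u_iff (ht : ∀ i, 1 ≤ t i) (y : VV k t) :
    (multiPathGraph k t).Adj (inl true) y ↔ y = inl false ∨ ∃ i : Fin k, y = wn i 0 := by
  rw [multiPathGraph, SimpleGraph.fromRel_adj]
  match y with
  | inl true =>
      constructor
      · rintro ⟨h, -⟩; exact absurd rfl h
      · rintro (h | ⟨i, h⟩)
        · exact absurd h (by simp)
        · exact absurd h.symm (wn_ne_u (by have := ht i; omega))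
  | inl false => simp
  | inr ⟨i0, j0⟩ =>
      simp only [ne_eq, reduceCtorEq, not_false_iff, true_and]
      constructor
      · rintro (h | h)
        · right; refine ⟨i0, ?_⟩
          rw [inr_eq_wn, wn_eq_iff j0.2 (by have := ht i0; omega)]
          exact ⟨rfl, h⟩
        · exact absurd h id
      · rintro (h | ⟨i, h⟩)
        · exact absurd h (by simp)
        · left
          rw [inr_eq_wn, wn_eq_iff j0.2 (by have := ht i; omega)] at h
          exact h.2

lemma adj_v_iff (ht : ∀ i, 1 ≤ t i) (y : VV k t) :
    (multiPathGraph k t).Adj (inl false) y ↔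
      y = inl true ∨ ∃ i : Fin k, y = wn i (4 * t i - 1) := by
  rw [multiPathGraph, SimpleGraph.fromRel_adj]
  match y with
  | inl false =>
      constructor
      · rintro ⟨h, -⟩; exact absurd rfl h
      · rintro (h | ⟨i, h⟩)
        · exact absurd h (by simp)
        · exact absurd h.symm (wn_ne_v (by have := ht i; omega))
  | inl true => simp
  | inr ⟨i0, j0⟩ =>
      simp only [ne_eq, reduceCtorEq, not_false_iff, true_and]
      constructor
      · rintro (h | h)
        · right; refine ⟨i0, ?_⟩
          rw [inr_eq_wn, wn_eq_iff j0.2 (by have := ht i0; omega)]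
          exact ⟨rfl, h⟩
        · exact absurd h id
      · rintro (h | ⟨i, h⟩)
        · exact absurd h (by simp)
        · left
          rw [inr_eq_wn, wn_eq_iff j0.2 (by have := ht i; omega)] at h
          obtain ⟨rfl, h2⟩ := h
          exact h2

lemma adj_w_iff (ht : ∀ i, 1 ≤ t i) (i : Fin k) (j : ℕ) (hj : j < 4 * t i) (y : VV k t) :
    (multiPathGraph k t).Adj (wn i j) y ↔ y = lft i j ∨ y = rgt i j := by
  have h4 : 4 ≤ 4 * t i := by have := ht i; omega
  rw [show (wn i j : VV k t) = inr ⟨i, ⟨j, hj⟩⟩ from dif_pos hj]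
  rw [multiPathGraph, SimpleGraph.fromRel_adj]
  match y with
  | inl true =>
      simp only [ne_eq, reduceCtorEq, not_false_iff, true_and]
      constructor
      · rintro (h | h)
        · exact absurd h id
        · left; simp only [lft, h, if_pos]
      · rintro (h | h)
        · right
          by_cases h0 : j = 0
          · exact h0
          · rw [lft, if_neg h0] at h
            exact absurd h.symm (wn_ne_u (by omega))
        · rw [rgt] at h
          by_cases h1 : j + 1 = 4 * t i
          · rw [if_pos h1] at h; exact absurd h (by simp)
          · rw [if_neg h1] at h
            exact absurd h.symm (wn_ne_u (by omega))
  | inl false =>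
      simp only [ne_eq, reduceCtorEq, not_false_iff, true_and]
      constructor
      · rintro (h | h)
        · exact absurd h id
        · right; rw [rgt, if_pos (by omega)]
      · rintro (h | h)
        · rw [lft] at h
          by_cases h0 : j = 0
          · rw [if_pos h0] at h; exact absurd h (by simp)
          · rw [if_neg h0] at h
            exact absurd h.symm (wn_ne_v (by omega))
        · rw [rgt] at h
          by_cases h1 : j + 1 = 4 * t i
          · right; omega
          · rw [if_neg h1] at h
            exact absurd h.symm (wn_ne_v (by omega))
  | inr ⟨i0, j0⟩ =>
      have hj0 : (j0 : ℕ) < 4 * t i0 := j0.2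
      constructor
      · rintro ⟨hne, h | h⟩
        · obtain ⟨rfl, hjj⟩ := h
          simp only [Fin.val_mk] at hjj
          right
          rw [rgt, if_neg (by omega), inr_eq_wn, wn_eq_iff hj0 (by omega)]
          exact ⟨rfl, by omega⟩
        · obtain ⟨rfl, hjj⟩ := h
          simp only [Fin.val_mk] at hjj
          left
          rw [lft, if_neg (by omega), inr_eq_wn, wn_eq_iff hj0 (by omega)]
          exact ⟨rfl, by omega⟩
      · rintro (h | h)
        · rw [lft] at h
          by_cases h0 : j = 0
          · rw [if_pos h0] at h; exact absurd h (by simp)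
          · rw [if_neg h0, inr_eq_wn, wn_eq_iff hj0 (by omega)] at h
            obtain ⟨rfl, h2⟩ := h
            refine ⟨?_, Or.inr ⟨rfl, by simp only [Fin.val_mk]; omega⟩⟩
            simp only [ne_eq, Sum.inr.injEq, Sigma.mk.inj_iff, heq_eq_eq, Fin.mk.injEq,
              true_and, Fin.ext_iff]
            omega
        · rw [rgt] at h
          by_cases h1 : j + 1 = 4 * t i
          · rw [if_pos h1] at h; exact absurd h (by simp)
          · rw [if_neg h1, inr_eq_wn, wn_eq_iff hj0 (by omega)] at h
            obtain ⟨rfl, h2⟩ := h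
            refine ⟨?_, Or.inl ⟨rfl, by simp only [Fin.val_mk]; omega⟩⟩
            simp only [ne_eq, Sum.inr.injEq, Sigma.mk.inj_iff, heq_eq_eq, Fin.mk.injEq,
              true_and, Fin.ext_iff]
            omega

def HH (col : Sym2 (VV k t) → Fin q) (c₀ : Fin q) : SimpleGraph (VV k t) :=
  SimpleGraph.fromEdgeSet {e | e ∈ (multiPathGraph k t).edgeSet ∧ col e = c₀}

lemma HH_adj {q : ℕ} (col : Sym2 (VV k t) → Fin q) (c₀ : Fin q) (x y : VV k t) :
    (HH col c₀).Adj x y ↔ (multiPathGraph k t).Adj x y ∧ col s(x, y) = c₀ := by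
  rw [HH, SimpleGraph.fromEdgeSet_adj]
  simp only [Set.mem_setOf_eq, SimpleGraph.mem_edgeSet]
  constructor
  · rintro ⟨⟨h1, h2⟩, -⟩; exact ⟨h1, h2⟩
  · rintro ⟨h1, h2⟩; exact ⟨⟨h1, h2⟩, h1.ne⟩

lemma HH_nbr {q : ℕ} (col : Sym2 (VV k t) → Fin q) (c₀ : Fin q) (x : VV k t) :
    (HH col c₀).neighborSet x
      = {y | (multiPathGraph k t).Adj x y ∧ col s(x, y) = c₀} := by
  ext y; exact HH_adj col c₀ x y

lemma lft_ne_rgt (ht : ∀ i, 1 ≤ t i) (i : Fin k) (j : ℕ) (hj : j < 4 * t i) :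
    (lft i j : VV k t) ≠ rgt i j := by
  have h4 : 4 ≤ 4 * t i := by have := ht i; omega
  rw [lft, rgt]
  by_cases h0 : j = 0 <;> by_cases h1 : j + 1 = 4 * t i
  · omega
  · rw [if_pos h0, if_neg h1]
    exact fun h => wn_ne_u (t := t) (i := i) (j := j+1) (by omega) h.symm
  · rw [if_neg h0, if_pos h1]
    exact wn_ne_v (by omega)
  · rw [if_neg h0, if_neg h1]
    intro h
    rw [wn_eq_iff (by omega) (by omega)] at h
    omega

lemma ncard_pair_filter {α : Type*} {a b : α} (hab : a ≠ b) (P : α → Prop)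
    [Decidable (P a)] [Decidable (P b)] :
    {y | (y = a ∨ y = b) ∧ P y}.ncard
      = (if P a then 1 else 0) + (if P b then 1 else 0) := by
  classical
  by_cases ha : P a <;> by_cases hb : P b
  · rw [if_pos ha, if_pos hb]
    rw [show {y | (y = a ∨ y = b) ∧ P y} = {a, b} by
      ext y; simp only [Set.mem_setOf_eq, Set.mem_insert_iff, Set.mem_singleton_iff]
      constructor
      · rintro ⟨h, -⟩; exact h
      · rintro (rfl | rfl) <;> simp [ha, hb]]
    exact Set.ncard_pair hab
  · rw [if_pos ha, if_neg hb]
    rw [show {y | (y = a ∨ y = b) ∧ P y} = {a} by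
      ext y; simp only [Set.mem_setOf_eq, Set.mem_singleton_iff]
      constructor
      · rintro ⟨hy, h⟩
        rcases hy with rfl | rfl
        · rfl
        · exact absurd h hb
      · rintro rfl; exact ⟨Or.inl rfl, ha⟩]
    exact Set.ncard_singleton a
  · rw [if_neg ha, if_pos hb]
    rw [show {y | (y = a ∨ y = b) ∧ P y} = {b} by
      ext y; simp only [Set.mem_setOf_eq, Set.mem_singleton_iff]
      constructor
      · rintro ⟨hy, h⟩
        rcases hy with rfl | rfl
        · exact absurd h ha
        · rfl
      · rintro rfl; exact ⟨Or.inr rfl, hb⟩]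
    exact Set.ncard_singleton b
  · rw [if_neg ha, if_neg hb]
    rw [show {y | (y = a ∨ y = b) ∧ P y} = ∅ by
      ext y; simp only [Set.mem_setOf_eq, Set.mem_empty_iff_false, iff_false, not_and]
      rintro (rfl | rfl) <;> assumption]
    exact Set.ncard_empty _

lemma col_lft {q : ℕ} (col : Sym2 (VV k t) → Fin q) (i : Fin k) (j : ℕ) (hj : j < 4 * t i) :
    col s(wn i j, lft i j) = col (pedge i j) := by
  by_cases h0 : j = 0
  · subst h0
    rw [lft, if_pos rfl, pedge, if_pos rfl, Sym2.eq_swap]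
  · rw [lft, if_neg h0, pedge, if_neg h0, if_pos hj, Sym2.eq_swap]

lemma col_rgt {q : ℕ} (col : Sym2 (VV k t) → Fin q) (i : Fin k) (j : ℕ) (hj : j < 4 * t i) :
    col s(wn i j, rgt i j) = col (pedge i (j + 1)) := by
  by_cases h1 : j + 1 = 4 * t i
  · have hje : j = 4 * t i - 1 := by omega
    rw [rgt, if_pos h1, pedge, if_neg (by omega), if_neg (by omega), hje]
  · rw [rgt, if_neg h1, pedge, if_neg (by omega), if_pos (by omega), Nat.add_sub_cancel]

lemma deg_internal {q : ℕ} (ht : ∀ i, 1 ≤ t i) (col : Sym2 (VV k t) → Fin q) (c₀ : Fin q)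
    (i : Fin k) (j : ℕ) (hj : j < 4 * t i) :
    ((HH col c₀).neighborSet (wn i j)).ncard =
      (if col (pedge i j) = c₀ then 1 else 0)
        + (if col (pedge i (j + 1)) = c₀ then 1 else 0) := by
  rw [HH_nbr]
  rw [show {y | (multiPathGraph k t).Adj (wn i j) y ∧ col s(wn i j, y) = c₀}
      = {y | (y = lft i j ∨ y = rgt i j) ∧ col s(wn i j, y) = c₀} by
    ext y; rw [Set.mem_setOf_eq, Set.mem_setOf_eq, adj_w_iff ht i j hj]]
  rw [ncard_pair_filter (lft_ne_rgt ht i j hj)]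
  rw [col_lft col i j hj, col_rgt col i j hj]

def flipV : VV k t → VV k t
  | inl b => inl !b
  | inr ⟨i, j⟩ => wn i (4 * t i - 1 - j)

lemma flip_invol : Function.Involutive (flipV (k := k) (t := t)) := by
  intro x
  match x with
  | inl b => simp [flipV]
  | inr ⟨i, j⟩ =>
      have hj : (j : ℕ) < 4 * t i := j.2
      have h1 : 4 * t i - 1 - (j : ℕ) < 4 * t i := by omega
      show flipV (wn i (4 * t i - 1 - (j : ℕ))) = inr ⟨i, j⟩
      rw [show (wn i (4 * t i - 1 - (j:ℕ)) : VV k t) = inr ⟨i, ⟨4 * t i - 1 - (j:ℕ), h1⟩⟩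
        from dif_pos h1]
      show (wn i (4 * t i - 1 - (4 * t i - 1 - (j:ℕ))) : VV k t) = inr ⟨i, j⟩
      rw [inr_eq_wn, wn_eq_iff (by omega) hj]
      exact ⟨rfl, by omega⟩

lemma not_two (ht : ∀ i, 1 ≤ t i) : ¬ HasLIEC (multiPathGraph k t) 2 := by
  rintro ⟨col, hcol⟩
  have hcol' : ∀ c₀ : Fin 2, LocallyIrregular (HH col c₀) := hcol
  -- alternation along each path
  have halt : ∀ (i : Fin k) (m : ℕ), m + 2 ≤ 4 * t i →
      ((col (pedge i m) = col (pedge i (m + 1))) ↔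
        ¬(col (pedge i (m + 2)) = col (pedge i (m + 1)))) := by
    intro i m hm2
    set c₀ := col (pedge i (m + 1)) with hc0
    have hcr : col s(wn i m, rgt i m) = c₀ := by
      rw [col_rgt col i m (by omega)]
    have h1 : (HH col c₀).Adj (wn i m) (wn i (m + 1)) := by
      rw [HH_adj]
      have hrg : (rgt i m : VV k t) = wn i (m + 1) := by rw [rgt, if_neg (by omega)]
      constructor
      · rw [adj_w_iff ht i m (by omega)]
        right; rw [hrg]
      · rw [← hrg]; exact hcr
    have h2 := hcol' c₀ h1
    rw [deg_internal ht col c₀ i m (by omega),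
      deg_internal ht col c₀ i (m + 1) (by omega)] at h2
    rw [← hc0] at h2
    by_cases hA : col (pedge i m) = c₀ <;> by_cases hB : col (pedge i (m + 2)) = c₀ <;>
      simp [hA, hB] at h2 ⊢
  have key : ∀ a b c d e : Fin 2,
      ((a = b) ↔ ¬(c = b)) → ((b = c) ↔ ¬(d = c)) → ((c = d) ↔ ¬(e = d)) → e = a := by
    decide
  have hper : ∀ (i : Fin k) (m : ℕ), m + 4 ≤ 4 * t i →
      col (pedge i (m + 4)) = col (pedge i m) := by
    intro i m hm
    exact key _ _ _ _ _ (halt i m (by omega)) (halt i (m + 1) (by omega))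
      (halt i (m + 2) (by omega))
  have hmul : ∀ (i : Fin k) (s : ℕ), 4 * s ≤ 4 * t i →
      col (pedge i (4 * s)) = col (pedge i 0) := by
    intro i s
    induction s with
    | zero => intro _; rfl
    | succ n ih =>
        intro h
        rw [show 4 * (n + 1) = 4 * n + 4 by ring, hper i (4 * n) (by omega), ih (by omega)]
  have hends : ∀ i : Fin k, col (pedge i (4 * t i)) = col (pedge i 0) :=
    fun i => hmul i (t i) le_rfl
  -- the flip argument
  obtain ⟨c₀, hc0⟩ : ∃ c : Fin 2, col s(Sum.inl true, Sum.inl false) = c := ⟨_, rfl⟩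
  have hadj_uv : (multiPathGraph k t).Adj (inl true) (inl false) := by
    rw [adj_u_iff ht]; left; rfl
  have hH : (HH col c₀).Adj (inl true) (inl false) := by
    rw [HH_adj]; exact ⟨hadj_uv, hc0⟩
  apply hcol' c₀ hH
  have hmem : ∀ (S : Set (VV k t)) (y : VV k t), y ∈ flipV '' S ↔ flipV y ∈ S := by
    intro S y
    constructor
    · rintro ⟨z, hz, rfl⟩; rwa [flip_invol z]
    · intro h; exact ⟨flipV y, h, flip_invol y⟩
  have himg : flipV '' ((HH col c₀).neighborSet (inl true))
      = (HH col c₀).neighborSet (inl false) := by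
    ext y
    rw [hmem, HH_nbr, HH_nbr, Set.mem_setOf_eq, Set.mem_setOf_eq]
    match y with
    | inl true =>
        simp only [flipV, Bool.not_true]
        constructor
        · rintro ⟨-, h⟩
          exact ⟨hadj_uv.symm, by rw [Sym2.eq_swap]; exact h⟩
        · rintro ⟨-, h⟩
          exact ⟨hadj_uv, by rw [Sym2.eq_swap]; exact h⟩
    | inl false =>
        simp only [flipV, Bool.not_false]
        constructor
        · rintro ⟨h, -⟩; exact absurd rfl h.ne
        · rintro ⟨h, -⟩; exact absurd rfl h.ne
    | inr ⟨i, j⟩ =>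
        have hj : (j : ℕ) < 4 * t i := j.2
        have hfl : flipV (inr ⟨i, j⟩ : VV k t) = wn i (4 * t i - 1 - (j : ℕ)) := rfl
        rw [hfl]
        by_cases hj1 : (j : ℕ) = 4 * t i - 1
        · have hz : 4 * t i - 1 - (j : ℕ) = 0 := by omega
          rw [hz]
          have e0 : (s(Sum.inl true, wn i 0) : Sym2 (VV k t)) = pedge i 0 :=
            (if_pos rfl).symm
          have eN : (s(Sum.inl false, (inr ⟨i, j⟩ : VV k t)) : Sym2 (VV k t))
              = pedge i (4 * t i) := by
            rw [inr_eq_wn, hj1, pedge, if_neg (by have := ht i; omega), if_neg (by omega),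
              Sym2.eq_swap]
          constructor
          · rintro ⟨-, h⟩
            refine ⟨?_, ?_⟩
            · rw [adj_v_iff ht]
              right
              exact ⟨i, by rw [inr_eq_wn, hj1]⟩
            · rw [eN, hends i, ← e0]
              exact h
          · rintro ⟨-, h⟩
            refine ⟨?_, ?_⟩
            · rw [adj_u_iff ht]
              right
              exact ⟨i, rfl⟩
            · rw [e0, ← hends i, ← eN]
              exact h
        · constructor
          · rintro ⟨h, -⟩
            rw [adj_u_iff ht] at h
            rcases h with h | ⟨i', h⟩
            · exact absurd h (wn_ne_v (by omega))
            · rw [wn_eq_iff (by omega) (by have := ht i'; omega)] at h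
              omega
          · rintro ⟨h, -⟩
            rw [adj_v_iff ht] at h
            rcases h with h | ⟨i', h⟩
            · exact absurd h (by simp)
            · rw [inr_eq_wn, wn_eq_iff hj (by have := ht i'; omega)] at h
              obtain ⟨rfl, h2⟩ := h
              omega
  rw [← himg, Set.ncard_image_of_injective _ flip_invol.injective]

def ecm (m : ℕ) : Fin 3 := if m ≤ 1 then 0 else if m % 4 ≤ 1 then 2 else 1

def ecf : VV k t → VV k t → Fin 3
  | inl _, inl _ => 0
  | inl b, inr _ => if b then 0 else 2
  | inr _, inl b => if b then 0 else 2
  | inr ⟨_, j⟩, inr ⟨_, j'⟩ => ecm (min (j : ℕ) (j' : ℕ) + 1)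

lemma ecf_symm (x y : VV k t) : ecf x y = ecf y x := by
  match x, y with
  | inl a, inl b => rfl
  | inl a, inr ⟨i, j⟩ => rfl
  | inr ⟨i, j⟩, inl a => rfl
  | inr ⟨i, j⟩, inr ⟨i', j'⟩ => show ecm _ = ecm _ ; rw [Nat.min_comm]

def col3 : Sym2 (VV k t) → Fin 3 := Sym2.lift ⟨ecf, ecf_symm⟩

lemma col3_mk (x y : VV k t) : col3 s(x, y) = ecf x y := rfl

lemma col3_pedge (ht : ∀ i, 1 ≤ t i) (i : Fin k) (m : ℕ) (hm : m ≤ 4 * t i) :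
    col3 (t := t) (pedge i m) = ecm m := by
  have h4 : 4 ≤ 4 * t i := by have := ht i; omega
  by_cases h0 : m = 0
  · subst h0
    rw [pedge, if_pos rfl, col3_mk,
      show (wn i 0 : VV k t) = inr ⟨i, ⟨0, by omega⟩⟩ from dif_pos (by omega)]
    rfl
  by_cases hlt : m < 4 * t i
  · rw [pedge, if_neg h0, if_pos hlt, col3_mk,
      show (wn i (m - 1) : VV k t) = inr ⟨i, ⟨m - 1, by omega⟩⟩ from dif_pos (by omega),
      show (wn i m : VV k t) = inr ⟨i, ⟨m, hlt⟩⟩ from dif_pos hlt]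
    show ecm (min (m - 1) m + 1) = ecm m
    congr 1
    omega
  · have hm4 : m = 4 * t i := by omega
    rw [pedge, if_neg h0, if_neg hlt, col3_mk,
      show (wn i (4 * t i - 1) : VV k t) = inr ⟨i, ⟨4 * t i - 1, by omega⟩⟩
        from dif_pos (by omega)]
    show (2 : Fin 3) = ecm m
    rw [ecm, if_neg (by omega), if_pos (by omega)]

lemma ecm_hi (j : ℕ) (h2 : 2 ≤ j) : ecm j = if j % 4 ≤ 1 then 2 else 1 := by
  rw [ecm, if_neg (by omega)]

lemma ecm_alt (j : ℕ) : (ecm j = ecm (j + 1)) ↔ ¬(ecm (j + 2) = ecm (j + 1)) := by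
  rcases Nat.lt_or_ge j 2 with h | h
  · interval_cases j <;> decide
  · rw [ecm_hi j h, ecm_hi (j + 1) (by omega), ecm_hi (j + 2) (by omega)]
    have hm : j % 4 = 0 ∨ j % 4 = 1 ∨ j % 4 = 2 ∨ j % 4 = 3 := by omega
    rcases hm with h0 | h0 | h0 | h0
    · rw [if_pos (by omega), if_pos (by omega), if_neg (by omega)]; decide
    · rw [if_pos (by omega), if_neg (by omega), if_neg (by omega)]; decide
    · rw [if_neg (by omega), if_neg (by omega), if_pos (by omega)]; decide
    · rw [if_neg (by omega), if_pos (by omega), if_pos (by omega)]; decide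

lemma deg3 (ht : ∀ i, 1 ≤ t i) (c₀ : Fin 3) (i : Fin k) (j : ℕ) (hj : j < 4 * t i) :
    ((HH (col3 (t := t)) c₀).neighborSet (wn i j)).ncard =
      (if ecm j = c₀ then 1 else 0) + (if ecm (j + 1) = c₀ then 1 else 0) := by
  rw [deg_internal ht col3 c₀ i j hj, col3_pedge ht i j (by omega),
    col3_pedge ht i (j + 1) (by omega)]

lemma col3_u (z : VV k t) : col3 s(Sum.inl true, z) = 0 := by
  match z with
  | inl b => rfl
  | inr ⟨i, j⟩ => rfl

lemma col3_u' (z : VV k t) : col3 s(z, Sum.inl true) = 0 := by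
  rw [Sym2.eq_swap]; exact col3_u z

lemma col3_v_inr (i : Fin k) (j : Fin (4 * t i)) :
    col3 s(Sum.inl false, (inr ⟨i, j⟩ : VV k t)) = 2 := rfl

lemma has_three (hk : 2 ≤ k) (ht : ∀ i, 1 ≤ t i) : HasLIEC (multiPathGraph k t) 3 := by
  classical
  refine ⟨col3, fun c₀ => ?_⟩
  show LocallyIrregular (HH col3 c₀)
  have h0k : 0 < k := by omega
  have F1 : 3 ≤ ((HH (col3 (t := t)) 0).neighborSet (inl true)).ncard := by
    have hb0 : (0 : ℕ) < 4 * t ⟨0, h0k⟩ := by have := ht ⟨0, h0k⟩; omega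
    have hb1 : (0 : ℕ) < 4 * t ⟨1, hk⟩ := by have := ht ⟨1, hk⟩; omega
    have hsub : ({inl false, wn ⟨0, h0k⟩ 0, wn ⟨1, hk⟩ 0} : Set (VV k t))
        ⊆ (HH col3 0).neighborSet (inl true) := by
      rw [HH_nbr]
      rintro z (rfl | rfl | rfl)
      · exact ⟨by rw [adj_u_iff ht]; left; rfl, col3_u _⟩
      · exact ⟨by rw [adj_u_iff ht]; right; exact ⟨_, rfl⟩, col3_u _⟩
      · exact ⟨by rw [adj_u_iff ht]; right; exact ⟨_, rfl⟩, col3_u _⟩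
    have hab : (inl false : VV k t) ≠ wn ⟨0, h0k⟩ 0 := fun h => wn_ne_v hb0 h.symm
    have hac : (inl false : VV k t) ≠ wn ⟨1, hk⟩ 0 := fun h => wn_ne_v hb1 h.symm
    have hbc : (wn ⟨0, h0k⟩ 0 : VV k t) ≠ wn ⟨1, hk⟩ 0 := by
      intro h
      rw [wn_eq_iff hb0 hb1] at h
      obtain ⟨h1, -⟩ := h
      exact absurd h1 (by simp)
    have h3 : ({inl false, wn ⟨0, h0k⟩ 0, wn ⟨1, hk⟩ 0} : Set (VV k t)).ncard = 3 := by
      rw [Set.ncard_insert_of_notMem (by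
        rintro (h | h)
        · exact hab h
        · exact hac h), Set.ncard_pair hbc]
    calc (3 : ℕ) = ({inl false, wn ⟨0, h0k⟩ 0, wn ⟨1, hk⟩ 0} : Set (VV k t)).ncard := h3.symm
      _ ≤ _ := Set.ncard_le_ncard hsub (Set.toFinite _)
  have F2 : ((HH (col3 (t := t)) 0).neighborSet (inl false)).ncard = 1 := by
    have hset : (HH (col3 (t := t)) 0).neighborSet (inl false) = {inl true} := by
      rw [HH_nbr]
      ext z
      simp only [Set.mem_setOf_eq, Set.mem_singleton_iff]
      constructor
      · rintro ⟨hadj, hcol⟩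
        rw [adj_v_iff ht] at hadj
        rcases hadj with rfl | ⟨i, rfl⟩
        · rfl
        · rw [show (wn i (4 * t i - 1) : VV k t)
              = inr ⟨i, ⟨4 * t i - 1, by have := ht i; omega⟩⟩
              from dif_pos (by have := ht i; omega), col3_v_inr] at hcol
          exact absurd hcol (by decide)
      · rintro rfl
        exact ⟨by rw [adj_v_iff ht]; left; rfl, rfl⟩
    rw [hset, Set.ncard_singleton]
  have F3 : 2 ≤ ((HH (col3 (t := t)) 2).neighborSet (inl false)).ncard := by
    have hb0 : 4 * t ⟨0, h0k⟩ - 1 < 4 * t ⟨0, h0k⟩ := by have := ht ⟨0, h0k⟩; omega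
    have hb1 : 4 * t ⟨1, hk⟩ - 1 < 4 * t ⟨1, hk⟩ := by have := ht ⟨1, hk⟩; omega
    have hsub : ({wn ⟨0, h0k⟩ (4 * t ⟨0, h0k⟩ - 1), wn ⟨1, hk⟩ (4 * t ⟨1, hk⟩ - 1)}
          : Set (VV k t)) ⊆ (HH col3 2).neighborSet (inl false) := by
      rw [HH_nbr]
      rintro z (rfl | rfl)
      · refine ⟨by rw [adj_v_iff ht]; right; exact ⟨_, rfl⟩, ?_⟩
        rw [show (wn ⟨0, h0k⟩ (4 * t ⟨0, h0k⟩ - 1) : VV k t)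
            = inr ⟨⟨0, h0k⟩, ⟨4 * t ⟨0, h0k⟩ - 1, hb0⟩⟩ from dif_pos hb0, col3_v_inr]
      · refine ⟨by rw [adj_v_iff ht]; right; exact ⟨_, rfl⟩, ?_⟩
        rw [show (wn ⟨1, hk⟩ (4 * t ⟨1, hk⟩ - 1) : VV k t)
            = inr ⟨⟨1, hk⟩, ⟨4 * t ⟨1, hk⟩ - 1, hb1⟩⟩ from dif_pos hb1, col3_v_inr]
    have hbc : (wn ⟨0, h0k⟩ (4 * t ⟨0, h0k⟩ - 1) : VV k t)
        ≠ wn ⟨1, hk⟩ (4 * t ⟨1, hk⟩ - 1) := by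
      intro h
      rw [wn_eq_iff hb0 hb1] at h
      obtain ⟨h1, -⟩ := h
      exact absurd h1 (by simp)
    calc (2 : ℕ) = ({wn ⟨0, h0k⟩ (4 * t ⟨0, h0k⟩ - 1), wn ⟨1, hk⟩ (4 * t ⟨1, hk⟩ - 1)}
          : Set (VV k t)).ncard := (Set.ncard_pair hbc).symm
      _ ≤ _ := Set.ncard_le_ncard hsub (Set.toFinite _)
  intro x y hxy
  rw [HH_adj] at hxy
  obtain ⟨hadj, hcol⟩ := hxy
  rcases x with a | ⟨i, j⟩ <;> rcases y with b | ⟨i', j'⟩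
  · -- inl a, inl b
    cases a <;> cases b
    · exact absurd rfl hadj.ne
    · -- v u
      have hc : c₀ = 0 := by rw [← hcol]; exact col3_u' _
      subst hc
      omega
    · -- u v
      have hc : c₀ = 0 := by rw [← hcol]; exact col3_u _
      subst hc
      omega
    · exact absurd rfl hadj.ne
  · -- inl a, inr
    cases a
    · -- v, internal : class 2
      have hc : c₀ = 2 := by rw [← hcol]; exact col3_v_inr i' j'
      subst hc
      rw [adj_v_iff ht] at hadj
      rcases hadj with h | ⟨i2, h⟩
      · exact absurd h (by simp)
      · have hb : 4 * t i2 - 1 < 4 * t i2 := by have := ht i2; omega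
        rw [h, deg3 ht 2 i2 (4 * t i2 - 1) hb,
          show 4 * t i2 - 1 + 1 = 4 * t i2 from by have := ht i2; omega]
        have e1 : ecm (4 * t i2 - 1) = 1 := by
          rw [ecm_hi _ (by have := ht i2; omega), if_neg (by have := ht i2; omega)]
        have e2 : ecm (4 * t i2) = 2 := by
          rw [ecm_hi _ (by have := ht i2; omega), if_pos (by omega)]
        rw [e1, e2, if_neg (show ¬(1:Fin 3) = 2 by decide),
          if_pos (show (2:Fin 3) = 2 from rfl)]
        omega
    · -- u, internal : class 0
      have hc : c₀ = 0 := by rw [← hcol]; exact col3_u _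
      subst hc
      rw [adj_u_iff ht] at hadj
      rcases hadj with h | ⟨i2, h⟩
      · exact absurd h (by simp)
      · have hb : (0:ℕ) < 4 * t i2 := by have := ht i2; omega
        rw [h, deg3 ht 0 i2 0 hb]
        have e1 : ecm 0 = 0 := rfl
        have e2 : ecm 1 = 0 := rfl
        rw [e1, e2, if_pos (show (0:Fin 3) = 0 from rfl)]
        omega
  · -- inr, inl b
    cases b
    · -- internal, v
      have hc : c₀ = 2 := by rw [← hcol, Sym2.eq_swap]; exact col3_v_inr i j
      subst hc
      have hadj' := hadj.symm
      rw [adj_v_iff ht] at hadj'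
      rcases hadj' with h | ⟨i2, h⟩
      · exact absurd h (by simp)
      · have hb : 4 * t i2 - 1 < 4 * t i2 := by have := ht i2; omega
        rw [h, deg3 ht 2 i2 (4 * t i2 - 1) hb,
          show 4 * t i2 - 1 + 1 = 4 * t i2 from by have := ht i2; omega]
        have e1 : ecm (4 * t i2 - 1) = 1 := by
          rw [ecm_hi _ (by have := ht i2; omega), if_neg (by have := ht i2; omega)]
        have e2 : ecm (4 * t i2) = 2 := by
          rw [ecm_hi _ (by have := ht i2; omega), if_pos (by omega)]
        rw [e1, e2, if_neg (show ¬(1:Fin 3) = 2 by decide),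
          if_pos (show (2:Fin 3) = 2 from rfl)]
        omega
    · -- internal, u
      have hc : c₀ = 0 := by rw [← hcol]; exact col3_u' _
      subst hc
      have hadj' := hadj.symm
      rw [adj_u_iff ht] at hadj'
      rcases hadj' with h | ⟨i2, h⟩
      · exact absurd h (by simp)
      · have hb : (0:ℕ) < 4 * t i2 := by have := ht i2; omega
        rw [h, deg3 ht 0 i2 0 hb]
        rw [show ecm 0 = 0 from rfl, show ecm 1 = 0 from rfl,
          if_pos (show (0:Fin 3) = 0 from rfl)]
        omega
  · -- inr, inr
    have hj := j.2
    have hj' := j'.2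
    rw [inr_eq_wn i j, inr_eq_wn i' j'] at hadj hcol ⊢
    rw [adj_w_iff ht i (j : ℕ) hj] at hadj
    rcases hadj with h | h
    · -- y = lft
      rw [lft] at h
      by_cases h0 : (j : ℕ) = 0
      · rw [if_pos h0] at h; exact absurd h (wn_ne_u hj')
      · rw [if_neg h0, wn_eq_iff hj' (by omega)] at h
        obtain ⟨rfl, hval⟩ := h
        have hcl := col_lft (col3 (t := t)) i' (j : ℕ) hj
        rw [lft, if_neg h0] at hcl
        rw [hval] at hcol
        rw [hcl, col3_pedge ht i' (j : ℕ) (by omega)] at hcol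
        subst hcol
        rw [hval, deg3 ht _ i' (j : ℕ) hj, deg3 ht _ i' ((j : ℕ) - 1) (by omega),
          show (j : ℕ) - 1 + 1 = (j : ℕ) from by omega]
        have halt := ecm_alt ((j : ℕ) - 1)
        rw [show (j : ℕ) - 1 + 1 = (j : ℕ) from by omega,
          show (j : ℕ) - 1 + 2 = (j : ℕ) + 1 from by omega] at halt
        by_cases hA : ecm ((j : ℕ) - 1) = ecm (j : ℕ) <;>
          by_cases hB : ecm ((j : ℕ) + 1) = ecm (j : ℕ) <;>
          simp [hA, hB] at halt ⊢
    · -- y = rgt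
      rw [rgt] at h
      by_cases h1 : (j : ℕ) + 1 = 4 * t i
      · rw [if_pos h1] at h; exact absurd h (wn_ne_v hj')
      · rw [if_neg h1, wn_eq_iff hj' (by omega)] at h
        obtain ⟨rfl, hval⟩ := h
        have hcr := col_rgt (col3 (t := t)) i' (j : ℕ) hj
        rw [rgt, if_neg h1] at hcr
        rw [hval] at hcol
        rw [hcr, col3_pedge ht i' ((j : ℕ) + 1) (by omega)] at hcol
        subst hcol
        rw [hval, deg3 ht _ i' (j : ℕ) hj, deg3 ht _ i' ((j : ℕ) + 1) (by omega)]
        have halt := ecm_alt (j : ℕ)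
        by_cases hA : ecm (j : ℕ) = ecm ((j : ℕ) + 1) <;>
          by_cases hB : ecm ((j : ℕ) + 2) = ecm ((j : ℕ) + 1) <;>
          simp [hA, hB] at halt ⊢

end MPG


/-- For `k ≥ 2`, the graph consisting of two adjacent vertices `u, v` joined, in addition
to the edge `uv`, by `k` internally disjoint paths of lengths `4 t_i + 1` (with `t_i ≥ 1`)
has locally irregular chromatic index exactly 3; in particular it admits no locally
irregular edge-coloring with at most 2 colors. -/
theorem multiPathGraph_LIEC (k : ℕ) (hk : 2 ≤ k) (t : Fin k → ℕ) (ht : ∀ i, 1 ≤ t i) :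
    HasLIEC (multiPathGraph k t) 3 ∧ ¬ HasLIEC (multiPathGraph k t) 2 :=
  ⟨MPG.has_three hk ht, MPG.not_two ht⟩
end
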